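/- arXiv:1101.0826 — 7 statements merged into one kernel-verified Lean document; each statement's English description precedes it below -/
import Mathlib

section
/- Let I ⊆ ℝ[x₁,…,xₙ] be an ideal and A = ℝ[x₁,…,xₙ]/I. If f ∈ A is a sum of squares in A (i.e., f = Σᵢ hᵢ² for some h₁,…,h_r ∈ A), then f is strongly nonnegative on V(I), that is, strongly nonnegative at every point P ∈ V_ℝ(I). -/
open MvPolynomial Polynomial

noncomputable section

/-- The ring `ℝ[ε]/(ε^m)`. -/
abbrev Eps (m : ℕ) : Type := AdjoinRoot ((Polynomial.X : Polynomial ℝ) ^ m)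

/-- An element `a₀ + a₁ε + ⋯ + a_{m-1}ε^{m-1}` of `ℝ[ε]/(ε^m)` is nonnegative if it is zero
or `a_N > 0` where `N = min {j : a_j ≠ 0}` (equivalently some, or any, polynomial
representative of it has positive lowest-order nonzero coefficient). -/
def EpsNonneg {m : ℕ} (z : Eps m) : Prop :=
  z = 0 ∨ ∃ p : Polynomial ℝ, AdjoinRoot.mk _ p = z ∧ 0 < p.coeff p.natTrailingDegree

/-- The real vanishing set `V_ℝ(I) ⊆ ℝⁿ` of an ideal `I ⊆ ℝ[x₁,…,xₙ]`. -/
def realVariety {n : ℕ} (I : Ideal (MvPolynomial (Fin n) ℝ)) : Set (Fin n → ℝ) :=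
  {P | ∀ p ∈ I, MvPolynomial.eval P p = 0}

/-- An `ℝ`-algebra homomorphism `φ : A → ℝ[ε]/(ε^m)` is at `P` if composing it with the
unique `ℝ`-algebra homomorphism `ℝ[ε]/(ε^m) → ℝ` gives evaluation at `P`; i.e. for every `p`,
`φ(p mod I)` agrees with `eval P p` modulo the ideal `(ε)`. -/
def AtPoint {n m : ℕ} (I : Ideal (MvPolynomial (Fin n) ℝ)) (P : Fin n → ℝ)
    (φ : (MvPolynomial (Fin n) ℝ ⧸ I) →ₐ[ℝ] Eps m) : Prop :=
  ∀ p : MvPolynomial (Fin n) ℝ,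
    φ (Ideal.Quotient.mk I p) - algebraMap ℝ (Eps m) (MvPolynomial.eval P p)
      ∈ Ideal.span {AdjoinRoot.root ((Polynomial.X : Polynomial ℝ) ^ m)}

/-- `f ∈ A = ℝ[x₁,…,xₙ]/I` is strongly nonnegative at `P` if for every `m` and every
`ℝ`-algebra homomorphism `φ : A → ℝ[ε]/(ε^m)` at `P`, `φ(f)` is nonnegative. -/
def StronglyNonnegAt {n : ℕ} (I : Ideal (MvPolynomial (Fin n) ℝ)) (P : Fin n → ℝ)
    (f : MvPolynomial (Fin n) ℝ ⧸ I) : Prop :=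
  ∀ (m : ℕ) (φ : (MvPolynomial (Fin n) ℝ ⧸ I) →ₐ[ℝ] Eps m),
    AtPoint I P φ → EpsNonneg (φ f)

/-- `f` is strongly nonnegative on `V(I)` if it is strongly nonnegative at every `P ∈ V_ℝ(I)`. -/
def StronglyNonneg {n : ℕ} (I : Ideal (MvPolynomial (Fin n) ℝ))
    (f : MvPolynomial (Fin n) ℝ ⧸ I) : Prop :=
  ∀ P ∈ realVariety I, StronglyNonnegAt I P f

/-- `f` is `k`-sos modulo `I`: `f ≡ Σᵢ gᵢ² (mod I)` with each `deg gᵢ ≤ k`. -/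
def KSosMod {n : ℕ} (I : Ideal (MvPolynomial (Fin n) ℝ)) (k : ℕ)
    (f : MvPolynomial (Fin n) ℝ) : Prop :=
  ∃ (r : ℕ) (g : Fin r → MvPolynomial (Fin n) ℝ),
    (∀ i, (g i).totalDegree ≤ k) ∧ f - ∑ i, (g i) ^ 2 ∈ I

/-- `f` is a sum of squares modulo `I` (no degree bound). -/
def SosMod {n : ℕ} (I : Ideal (MvPolynomial (Fin n) ℝ)) (f : MvPolynomial (Fin n) ℝ) : Prop :=
  ∃ (r : ℕ) (g : Fin r → MvPolynomial (Fin n) ℝ), f - ∑ i, (g i) ^ 2 ∈ I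

/-- `I` is `(d,k)`-sos: every polynomial of degree at most `d` which is nonnegative on
`V_ℝ(I)` is `k`-sos modulo `I`. -/
def IsDKSos {n : ℕ} (I : Ideal (MvPolynomial (Fin n) ℝ)) (d k : ℕ) : Prop :=
  ∀ f : MvPolynomial (Fin n) ℝ, f.totalDegree ≤ d →
    (∀ P ∈ realVariety I, 0 ≤ MvPolynomial.eval P f) → KSosMod I k f

/-- `I` is weakly `(1,k)`-sos: every polynomial of degree at most `1` whose image in
`A = ℝ[x]/I` is strongly nonnegative on `V(I)` is `k`-sos modulo `I`. -/
def WeaklyOneKSos {n : ℕ} (I : Ideal (MvPolynomial (Fin n) ℝ)) (k : ℕ) : Prop :=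
  ∀ f : MvPolynomial (Fin n) ℝ, f.totalDegree ≤ 1 →
    StronglyNonneg I (Ideal.Quotient.mk I f) → KSosMod I k f

/-- The maximal ideal `m_P ⊆ A = ℝ[x]/I` of functions vanishing at `P`. -/
def mIdeal {n : ℕ} (I : Ideal (MvPolynomial (Fin n) ℝ)) (P : Fin n → ℝ) :
    Ideal (MvPolynomial (Fin n) ℝ ⧸ I) :=
  Ideal.map (Ideal.Quotient.mk I) (RingHom.ker (MvPolynomial.eval P))

/-- A commutative ring is a regular local ring if it is Noetherian, local, and the dimension
of its cotangent space (equivalently, of its tangent space) over the residue field equals its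
Krull dimension. -/
def IsRegularLocal (R : Type) [CommRing R] : Prop :=
  IsNoetherianRing R ∧ ∃ _h : IsLocalRing R,
    (Module.finrank (IsLocalRing.ResidueField R) (IsLocalRing.CotangentSpace R) :
      WithBot (WithTop ℕ)) = ringKrullDim R

/-- `V(I)` is nonsingular at `P` if the localization of `A = ℝ[x]/I` at the maximal ideal
`m_P` is a regular local ring. -/
def IsNonsingularAt {n : ℕ} (I : Ideal (MvPolynomial (Fin n) ℝ)) (P : Fin n → ℝ) : Prop :=
  ∃ hp : (mIdeal I P).IsPrime, IsRegularLocal (@Localization.AtPrime _ _ (mIdeal I P) hp)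

/-- The tangent space of `V(I)` at `P`, viewed as the set of vectors `v ∈ ℝⁿ` such that there
is an `ℝ`-algebra homomorphism `A → ℝ[ε]/(ε²)` at `P` sending each `xᵢ` to `Pᵢ + vᵢ ε`. -/
def tangentVectors {n : ℕ} (I : Ideal (MvPolynomial (Fin n) ℝ)) (P : Fin n → ℝ) :
    Set (Fin n → ℝ) :=
  {v | ∃ φ : (MvPolynomial (Fin n) ℝ ⧸ I) →ₐ[ℝ] Eps 2,
    ∀ i : Fin n, φ (Ideal.Quotient.mk I (MvPolynomial.X i)) =
      algebraMap ℝ (Eps 2) (P i) + (v i) • AdjoinRoot.root ((Polynomial.X : Polynomial ℝ) ^ 2)}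

/-- `P ∈ V_ℝ(I)` is convex-singular: `P` is a singular point of `V(I)`, lies on the relative
boundary of `conv(V_ℝ(I))`, and the (affine) tangent space at `P` meets the relative interior
of `conv(V_ℝ(I))`. -/
def ConvexSingular {n : ℕ} (I : Ideal (MvPolynomial (Fin n) ℝ)) (P : Fin n → ℝ) : Prop :=
  ¬ IsNonsingularAt I P ∧
  P ∈ intrinsicFrontier ℝ (convexHull ℝ (realVariety I)) ∧
  ∃ v ∈ tangentVectors I P, P + v ∈ intrinsicInterior ℝ (convexHull ℝ (realVariety I))

/-- The `k`-th theta body of `I`. -/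
def thetaBody {n : ℕ} (I : Ideal (MvPolynomial (Fin n) ℝ)) (k : ℕ) : Set (Fin n → ℝ) :=
  {x | ∀ f : MvPolynomial (Fin n) ℝ, f.totalDegree ≤ 1 → KSosMod I k f →
    0 ≤ MvPolynomial.eval x f}

/-- `I` is `TH_k`-exact if the `k`-th theta body equals the closure of the convex hull of
`V_ℝ(I)`. -/
def ThetaExact {n : ℕ} (I : Ideal (MvPolynomial (Fin n) ℝ)) (k : ℕ) : Prop :=
  thetaBody I k = closure (convexHull ℝ (realVariety I))

/-- `I` is real radical: whenever `f^(2m) + Σᵢ gᵢ² ∈ I` for some `m ≥ 1`, we have `f ∈ I`. -/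
def IsRealRadical {n : ℕ} (I : Ideal (MvPolynomial (Fin n) ℝ)) : Prop :=
  ∀ f : MvPolynomial (Fin n) ℝ,
    (∃ m : ℕ, 1 ≤ m ∧ ∃ (r : ℕ) (g : Fin r → MvPolynomial (Fin n) ℝ),
      f ^ (2 * m) + ∑ i, (g i) ^ 2 ∈ I) → f ∈ I

/-- A formal power series is nonnegative if it is zero or its leading (lowest-order nonzero)
coefficient is positive. -/
def PSNonneg (F : PowerSeries ℝ) : Prop :=
  F = 0 ∨ ∃ N : ℕ, 0 < PowerSeries.coeff N F ∧ ∀ j < N, PowerSeries.coeff j F = 0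

/-- An `ℝ`-algebra homomorphism `φ : A → ℝ[[t]]` is at `P` if the preimage of the ideal `(t)`
is the maximal ideal of functions vanishing at `P`. -/
def PSAtPoint {n : ℕ} (I : Ideal (MvPolynomial (Fin n) ℝ)) (P : Fin n → ℝ)
    (φ : (MvPolynomial (Fin n) ℝ ⧸ I) →ₐ[ℝ] PowerSeries ℝ) : Prop :=
  ∀ p : MvPolynomial (Fin n) ℝ,
    (PowerSeries.constantCoeff (φ (Ideal.Quotient.mk I p)) = 0 ↔ MvPolynomial.eval P p = 0)

/-- The linear function induced by a polynomial `f` (of degree at most 1) on tangent vectors: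
`v ↦ Σᵢ (∂f/∂xᵢ) vᵢ`. -/
def linGrad {n : ℕ} (f : MvPolynomial (Fin n) ℝ) (v : Fin n → ℝ) : ℝ :=
  ∑ i : Fin n, MvPolynomial.eval (0 : Fin n → ℝ) (MvPolynomial.pderiv i f) * v i

end


lemma sos_trailing_pos {r : ℕ} (p : Fin r → Polynomial ℝ) (hq : (∑ i, p i ^ 2) ≠ 0) :
    0 < (∑ i, p i ^ 2).coeff (∑ i, p i ^ 2).natTrailingDegree := by
  classical
  set q := ∑ i, p i ^ 2 with hqdef
  have hS : (Finset.univ.filter fun i => p i ≠ 0).Nonempty := by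
    by_contra h
    apply hq
    rw [hqdef]
    refine Finset.sum_eq_zero fun i _ => ?_
    have : p i = 0 := by
      by_contra hi
      exact h ⟨i, Finset.mem_filter.2 ⟨Finset.mem_univ i, hi⟩⟩
    simp [this]
  set S := Finset.univ.filter fun i => p i ≠ 0 with hSdef
  set d := S.inf' hS fun i => (p i).natTrailingDegree with hd
  -- coefficients below 2*d vanish
  have hlow : ∀ j < 2 * d, q.coeff j = 0 := by
    intro j hj
    rw [hqdef, Polynomial.finset_sum_coeff]
    refine Finset.sum_eq_zero fun i _ => ?_
    by_cases hi : p i = 0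
    · simp [hi]
    · have hdi : d ≤ (p i).natTrailingDegree :=
        Finset.inf'_le _ (Finset.mem_filter.2 ⟨Finset.mem_univ i, hi⟩)
      have h2 : (p i ^ 2).natTrailingDegree = 2 * (p i).natTrailingDegree := by
        rw [sq, natTrailingDegree_mul hi hi, two_mul]
      apply coeff_eq_zero_of_lt_natTrailingDegree
      rw [h2]
      omega
  -- coefficient at 2*d
  have hcoef : ∀ i, (p i ^ 2).coeff (2 * d) = ((p i).coeff d) ^ 2 := by
    intro i
    by_cases hi : p i = 0
    · simp [hi]
    have hdi : d ≤ (p i).natTrailingDegree :=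
      Finset.inf'_le _ (Finset.mem_filter.2 ⟨Finset.mem_univ i, hi⟩)
    rcases eq_or_lt_of_le hdi with heq | hlt
    · have h2 : (p i ^ 2).natTrailingDegree = 2 * d := by
        rw [sq, natTrailingDegree_mul hi hi, ← heq, two_mul]
      have : (p i ^ 2).coeff (2 * d) = (p i ^ 2).trailingCoeff := by
        rw [trailingCoeff, h2]
      rw [this, sq, trailingCoeff_mul, ← sq, trailingCoeff, ← heq]
    · have h1 : (p i).coeff d = 0 := coeff_eq_zero_of_lt_natTrailingDegree hlt
      have h2 : (p i ^ 2).coeff (2 * d) = 0 := by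
        apply coeff_eq_zero_of_lt_natTrailingDegree
        rw [sq, natTrailingDegree_mul hi hi]
        omega
      rw [h1, h2]; ring
  have hq2d : q.coeff (2 * d) = ∑ i, ((p i).coeff d) ^ 2 := by
    rw [hqdef, Polynomial.finset_sum_coeff]
    exact Finset.sum_congr rfl fun i _ => hcoef i
  obtain ⟨i₀, hi₀S, hi₀⟩ := Finset.exists_mem_eq_inf' hS fun i => (p i).natTrailingDegree
  have hpi₀ : p i₀ ≠ 0 := (Finset.mem_filter.1 hi₀S).2
  have hc : (p i₀).coeff d ≠ 0 := by
    rw [hd, hi₀]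
    exact mt trailingCoeff_eq_zero.mp hpi₀
  have hpos : 0 < q.coeff (2 * d) := by
    rw [hq2d]
    refine Finset.sum_pos' (fun i _ => sq_nonneg _) ⟨i₀, Finset.mem_univ _, by positivity⟩
  have hntd : q.natTrailingDegree = 2 * d :=
    le_antisymm (natTrailingDegree_le_of_ne_zero hpos.ne') (le_natTrailingDegree hq hlow)
  rw [hntd]; exact hpos


/-- If `f ∈ A = ℝ[x₁,…,xₙ]/I` is a sum of squares in `A`, then `f` is strongly nonnegative
on `V(I)`, i.e. strongly nonnegative at every point of `V_ℝ(I)`. -/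
theorem sum_of_squares_stronglyNonneg {n : ℕ} (I : Ideal (MvPolynomial (Fin n) ℝ))
    (f : MvPolynomial (Fin n) ℝ ⧸ I) (r : ℕ) (h : Fin r → MvPolynomial (Fin n) ℝ ⧸ I)
    (hf : f = ∑ i, (h i) ^ 2) :
    StronglyNonneg I f := by
  classical
  subst hf
  intro P _hP m φ _hφ
  choose p hp using fun i => AdjoinRoot.mk_surjective (φ (h i))
  have hmk : AdjoinRoot.mk ((Polynomial.X : Polynomial ℝ) ^ m) (∑ i, p i ^ 2)
      = φ (∑ i, h i ^ 2) := by
    simp [map_sum, map_pow, hp]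
  by_cases hz : φ (∑ i, h i ^ 2) = 0
  · exact Or.inl hz
  · refine Or.inr ⟨∑ i, p i ^ 2, hmk, sos_trailing_pos p ?_⟩
    intro h0
    apply hz
    rw [← hmk, h0, map_zero]
end

section
/- Let I ⊆ ℝ[x₁,…,xₙ] be an ideal and d ≥ 1. If there exists a polynomial f ∈ ℝ[x₁,…,xₙ] of degree at most d which is nonnegative on V_ℝ(I) but whose image in A = ℝ[x₁,…,xₙ]/I is not strongly nonnegative on V(I), then I is not (d,k)-sos for any k ≥ 1. -/
open MvPolynomial Polynomial

lemma sumSq_trailing_pos {r : ℕ} (p : Fin r → Polynomial ℝ)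
    (hq : (∑ i, (p i) ^ 2) ≠ 0) :
    0 < (∑ i, (p i) ^ 2).coeff (∑ i, (p i) ^ 2).natTrailingDegree := by
  set q := ∑ i, (p i) ^ 2 with hqdef
  have hS : (Finset.univ.filter (fun i => p i ≠ 0)).Nonempty := by
    by_contra h
    apply hq
    rw [hqdef]
    apply Finset.sum_eq_zero
    intro i _
    have : p i = 0 := by
      by_contra hpi
      exact h ⟨i, Finset.mem_filter.mpr ⟨Finset.mem_univ i, hpi⟩⟩
    simp [this]
  set t := (Finset.univ.filter (fun i => p i ≠ 0)).inf' hS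
    (fun i => (p i).natTrailingDegree) with ht
  have hle : ∀ i, p i ≠ 0 → t ≤ (p i).natTrailingDegree := fun i hi =>
    Finset.inf'_le (f := fun i => (p i).natTrailingDegree)
      (Finset.mem_filter.mpr ⟨Finset.mem_univ i, hi⟩)
  have hntd_sq : ∀ i, p i ≠ 0 → ((p i) ^ 2).natTrailingDegree
      = 2 * (p i).natTrailingDegree := by
    intro i hi
    rw [pow_two, Polynomial.natTrailingDegree_mul hi hi, two_mul]
  have hcoeff_sq : ∀ i, ((p i) ^ 2).coeff (2 * (p i).natTrailingDegree)
      = (p i).trailingCoeff * (p i).trailingCoeff := by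
    intro i
    rw [pow_two, two_mul]
    exact Polynomial.coeff_mul_natTrailingDegree_add_natTrailingDegree
  have hterm_nonneg : ∀ i : Fin r, 0 ≤ ((p i) ^ 2).coeff (2 * t) := by
    intro i
    by_cases hpi : p i = 0
    · simp [hpi]
    rcases lt_or_eq_of_le (hle i hpi) with h | h
    · rw [Polynomial.coeff_eq_zero_of_lt_natTrailingDegree]
      rw [hntd_sq i hpi]; omega
    · rw [h, hcoeff_sq i]
      exact mul_self_nonneg _
  have hlow : ∀ j < 2 * t, q.coeff j = 0 := by
    intro j hj
    rw [hqdef, Polynomial.finset_sum_coeff]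
    apply Finset.sum_eq_zero
    intro i _
    by_cases hpi : p i = 0
    · simp [hpi]
    · apply Polynomial.coeff_eq_zero_of_lt_natTrailingDegree
      rw [hntd_sq i hpi]
      have := hle i hpi
      omega
  have hpos : 0 < q.coeff (2 * t) := by
    rw [hqdef, Polynomial.finset_sum_coeff]
    obtain ⟨i₀, hi₀mem, hi₀⟩ := Finset.exists_mem_eq_inf'
      hS (fun i => (p i).natTrailingDegree)
    have hi₀ne : p i₀ ≠ 0 := (Finset.mem_filter.mp hi₀mem).2
    have h2 : t = (p i₀).natTrailingDegree := by rw [ht, hi₀]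
    have hpos₀ : 0 < ((p i₀) ^ 2).coeff (2 * t) := by
      rw [h2, hcoeff_sq i₀]
      exact mul_self_pos.mpr fun h => hi₀ne (Polynomial.trailingCoeff_eq_zero.mp h)
    exact Finset.sum_pos' (fun i _ => hterm_nonneg i) ⟨i₀, Finset.mem_univ i₀, hpos₀⟩
  have hntd : q.natTrailingDegree = 2 * t :=
    le_antisymm (Polynomial.natTrailingDegree_le_of_ne_zero hpos.ne')
      (Polynomial.le_natTrailingDegree hq hlow)
  rwa [hntd]

lemma epsNonneg_sum_sq {m r : ℕ} (z : Fin r → Eps m) :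
    EpsNonneg (∑ i, (z i) ^ 2) := by
  choose p hp using fun i => AdjoinRoot.mk_surjective (z i)
  have hmk : AdjoinRoot.mk ((Polynomial.X : Polynomial ℝ) ^ m) (∑ i, (p i) ^ 2)
      = ∑ i, (z i) ^ 2 := by
    rw [map_sum]
    exact Finset.sum_congr rfl fun i _ => by rw [map_pow, hp i]
  by_cases h0 : (∑ i, (z i) ^ 2) = 0
  · exact Or.inl h0
  · refine Or.inr ⟨∑ i, (p i) ^ 2, hmk, sumSq_trailing_pos p ?_⟩
    intro habs
    rw [habs, map_zero] at hmk
    exact h0 hmk.symm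

/-- If some `f` of degree at most `d` is nonnegative on `V_ℝ(I)` but not strongly
nonnegative on `V(I)`, then `I` is not `(d,k)`-sos for any `k ≥ 1`. -/
theorem not_dksos_of_not_stronglyNonneg {n : ℕ} (I : Ideal (MvPolynomial (Fin n) ℝ))
    (d : ℕ) (hd : 1 ≤ d) (f : MvPolynomial (Fin n) ℝ) (hdeg : f.totalDegree ≤ d)
    (hnn : ∀ P ∈ realVariety I, 0 ≤ MvPolynomial.eval P f)
    (hns : ¬ StronglyNonneg I (Ideal.Quotient.mk I f)) :
    ∀ k : ℕ, 1 ≤ k → ¬ IsDKSos I d k := by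
  intro k hk hsos
  obtain ⟨r, g, hgdeg, hmem⟩ := hsos f hdeg hnn
  apply hns
  intro P hP m φ hφ
  have hq : Ideal.Quotient.mk I f = Ideal.Quotient.mk I (∑ i, (g i) ^ 2) :=
    (Ideal.Quotient.mk_eq_mk_iff_sub_mem f (∑ i, (g i) ^ 2)).mpr hmem
  have hφf : φ (Ideal.Quotient.mk I f)
      = ∑ i, (φ (Ideal.Quotient.mk I (g i))) ^ 2 := by
    rw [hq]
    simp only [map_sum, map_pow]
  rw [hφf]
  exact epsNonneg_sum_sq _
end

section
/- Let I ⊆ ℝ[x₁,…,xₙ] be an ideal and suppose P ∈ V_ℝ(I) is convex-singular, i.e., P is a singular point of V(I), P lies on the relative boundary of conv(V_ℝ(I)), and the tangent space of V(I) at P meets the relative interior of conv(V_ℝ(I)). Then I is not (1,k)-sos for any k ≥ 1. -/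
open MvPolynomial Polynomial

noncomputable section AuxLemmas

lemma aux_root_ne_zero : (AdjoinRoot.root ((Polynomial.X : Polynomial ℝ) ^ 2)) ≠ 0 := by
  intro h
  rw [← AdjoinRoot.mk_X, AdjoinRoot.mk_eq_zero] at h
  have := Polynomial.degree_le_of_dvd h Polynomial.X_ne_zero
  rw [Polynomial.degree_X_pow, Polynomial.degree_X] at this
  norm_num at this

def epsC0 : Eps 2 →ₐ[ℝ] ℝ := AdjoinRoot.liftAlgHom _ (Algebra.ofId ℝ ℝ) 0 (by simp)

lemma epsC0_root : epsC0 (AdjoinRoot.root ((Polynomial.X : Polynomial ℝ) ^ 2)) = 0 :=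
  AdjoinRoot.liftAlgHom_root _ _ _ _

lemma epsC0_sq_eq_zero {z : Eps 2} (h : epsC0 z = 0) : z ^ 2 = 0 := by
  obtain ⟨p, rfl⟩ := AdjoinRoot.mk_surjective z
  rw [epsC0, AdjoinRoot.liftAlgHom_mk] at h
  have h0 : p.coeff 0 = 0 := by
    simpa [Polynomial.coeff_zero_eq_eval_zero] using h
  obtain ⟨r, rfl⟩ := Polynomial.X_dvd_iff.mpr h0
  rw [← map_pow, mul_pow, map_mul, AdjoinRoot.mk_self, zero_mul]

/-- Supporting hyperplane at an intrinsic frontier point, strict at a given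
intrinsic interior point. -/
lemma exists_supporting {n : ℕ} (Vr : Set (Fin n → ℝ)) (P w : Fin n → ℝ)
    (hfront : P ∈ intrinsicFrontier ℝ (convexHull ℝ Vr))
    (hw : w ∈ intrinsicInterior ℝ (convexHull ℝ Vr)) :
    ∃ G : (Fin n → ℝ) →L[ℝ] ℝ, (∀ x ∈ convexHull ℝ Vr, G x ≤ G P) ∧ G w < G P := by
  classical
  set C : Set (Fin n → ℝ) := convexHull ℝ Vr with hCdef
  set W := affineSpan ℝ C with hWdef
  obtain ⟨xP, hxPfr, hxP⟩ := hfront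
  have hPW : P ∈ W := hxP ▸ xP.2
  obtain ⟨xQ, hxQint, hxQ⟩ := hw
  have hQW : w ∈ W := hxQ ▸ xQ.2
  have hwC : w ∈ C := intrinsicInterior_subset ⟨xQ, hxQint, hxQ⟩
  set D := W.direction with hDdef
  have hvD : w - P ∈ D := by
    simpa using AffineSubspace.vsub_mem_direction hQW hPW
  have hfwd : ∀ y : D, P + ↑y ∈ W := fun y => by
    simpa [add_comm] using AffineSubspace.vadd_mem_of_mem_direction y.2 hPW
  have hbwd : ∀ z : W, (↑z : Fin n → ℝ) - P ∈ D := fun z => by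
    simpa using AffineSubspace.vsub_mem_direction z.2 hPW
  let e : D ≃ₜ W :=
  { toFun := fun y => ⟨P + ↑y, hfwd y⟩
    invFun := fun z => ⟨↑z - P, hbwd z⟩
    left_inv := fun y => by ext; simp
    right_inv := fun z => by ext; simp
    continuous_toFun := Continuous.subtype_mk (continuous_const.add continuous_subtype_val) hfwd
    continuous_invFun := Continuous.subtype_mk (continuous_subtype_val.sub continuous_const) hbwd }
  set s' : Set W := (Subtype.val) ⁻¹' C with hs'def
  set s₂ : Set D := e ⁻¹' s' with hs₂def
  have hmem₂ : ∀ y : D, y ∈ s₂ ↔ P + ↑y ∈ C := fun y => Iff.rfl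
  have hint₂ : interior s₂ = e ⁻¹' (interior s') := (Homeomorph.preimage_interior e s').symm
  -- v' in interior
  have hv' : (⟨w - P, hvD⟩ : D) ∈ interior s₂ := by
    rw [hint₂]
    have : e ⟨w - P, hvD⟩ = xQ := by
      apply Subtype.ext
      show P + (w - P) = ↑xQ
      rw [hxQ]; ring
    show e ⟨w - P, hvD⟩ ∈ interior s'
    rw [this]; exact hxQint
  -- 0 not in interior
  have h0 : (0 : D) ∉ interior s₂ := by
    rw [hint₂]
    intro hcon
    have : e 0 = xP := by
      apply Subtype.ext
      show P + (0 : Fin n → ℝ) = ↑xP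
      rw [hxP]; ring
    rw [Set.mem_preimage, this] at hcon
    exact hxPfr.2 hcon
  have hCconv : Convex ℝ C := convex_convexHull ℝ Vr
  have hs₂conv : Convex ℝ s₂ := by
    intro y₁ h₁ y₂ h₂ a b ha hb hab
    rw [hmem₂] at h₁ h₂ ⊢
    have key : P + ↑(a • y₁ + b • y₂) = a • (P + ↑y₁) + b • (P + ↑y₂) := by
      push_cast
      rw [smul_add, smul_add,
        show a • P + a • (y₁ : Fin n → ℝ) + (b • P + b • (y₂ : Fin n → ℝ))
          = (a • P + b • P) + (a • (y₁ : Fin n → ℝ) + b • (y₂ : Fin n → ℝ)) from by abel,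
        ← add_smul, hab, one_smul]
    rw [key]
    exact hCconv h₁ h₂ ha hb hab
  obtain ⟨g, hg⟩ := geometric_hahn_banach_open_point (hs₂conv.interior) isOpen_interior h0
  have hgneg : ∀ y ∈ interior s₂, g y < 0 := fun y hy => by simpa using hg y hy
  have hvlt : g ⟨w - P, hvD⟩ < 0 := hgneg _ hv'
  have hgle : ∀ y ∈ s₂, g y ≤ 0 := by
    intro y hy
    by_contra hpos
    push_neg at hpos
    set c := g ⟨w - P, hvD⟩ with hcdef
    have hd : 0 < g y - c := by linarith
    have ht : (0:ℝ) < g y / (g y - c) := div_pos hpos hd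
    have ht2 : 0 ≤ 1 - g y / (g y - c) := by
      rw [sub_nonneg, div_le_one hd]; linarith
    have hmem := hs₂conv.combo_interior_self_mem_interior hv' hy ht ht2 (by ring)
    have hlt := hgneg _ hmem
    rw [map_add, map_smul, map_smul, smul_eq_mul, smul_eq_mul] at hlt
    have heq : g y / (g y - c) * c + (1 - g y / (g y - c)) * g y = 0 := by
      field_simp
      ring
    rw [← hcdef] at hlt
    linarith
  obtain ⟨G, hG, -⟩ := exists_extension_norm_eq D g
  refine ⟨G, ?_, ?_⟩
  · intro x hx
    have hxW : x ∈ W := subset_affineSpan ℝ C hx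
    have hxD : x - P ∈ D := by simpa using AffineSubspace.vsub_mem_direction hxW hPW
    have hmem : (⟨x - P, hxD⟩ : D) ∈ s₂ := by
      rw [hmem₂]
      show P + (x - P) ∈ C
      have : P + (x - P) = x := by ring
      rw [this]; exact hx
    have h1 := hgle _ hmem
    rw [← hG] at h1
    have : G (x - P) = G x - G P := by rw [map_sub]
    rw [show ((⟨x - P, hxD⟩ : D) : Fin n → ℝ) = x - P from rfl] at h1
    linarith [this ▸ h1]
  · have h1 : g ⟨w - P, hvD⟩ = G (w - P) := (hG _).symm
    have : G (w - P) = G w - G P := map_sub _ _ _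
    linarith [hvlt]
end AuxLemmas

/-- If `P ∈ V_ℝ(I)` is convex-singular, then `I` is not `(1,k)`-sos for any `k ≥ 1`. -/
theorem not_oneksos_of_convexSingular {n : ℕ} (I : Ideal (MvPolynomial (Fin n) ℝ))
    (P : Fin n → ℝ) (hP : P ∈ realVariety I) (hcs : ConvexSingular I P) :
    ∀ k : ℕ, 1 ≤ k → ¬ IsDKSos I 1 k := by
  intro k hk hsos
  classical
  obtain ⟨-, hfront, v, hvtan, hQ⟩ := hcs
  obtain ⟨φ, hφ⟩ := hvtan
  obtain ⟨G, hGle, hGlt⟩ := exists_supporting (realVariety I) P (P + v) hfront hQ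
  set l : Fin n → ℝ := fun i => -(G (Pi.single i 1)) with hldef
  have hGsum : ∀ x : Fin n → ℝ, G x = ∑ i, x i * G (Pi.single i 1) := by
    intro x
    have hx : ∑ i, Pi.single i (x i) = x := Finset.univ_sum_single x
    conv_lhs => rw [← hx]
    rw [map_sum]
    refine Finset.sum_congr rfl fun i _ => ?_
    have hs : Pi.single i (x i) = x i • (Pi.single i 1 : Fin n → ℝ) := by
      rw [← Pi.single_smul, smul_eq_mul, mul_one]
    rw [hs, map_smul, smul_eq_mul]
  have hlsum : ∀ x : Fin n → ℝ, ∑ i, l i * x i = -(G x) := by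
    intro x
    rw [hGsum x, ← Finset.sum_neg_distrib]
    exact Finset.sum_congr rfl fun i _ => by simp only [hldef]; ring
  set f : MvPolynomial (Fin n) ℝ :=
    MvPolynomial.C (G P) + ∑ i, MvPolynomial.C (l i) * MvPolynomial.X i with hfdef
  have heval : ∀ x : Fin n → ℝ, MvPolynomial.eval x f = G P - G x := by
    intro x
    rw [hfdef, map_add, map_sum]
    simp only [MvPolynomial.eval_C, MvPolynomial.eval_mul, MvPolynomial.eval_X]
    rw [hlsum x]; ring
  have hdeg : f.totalDegree ≤ 1 := by
    rw [hfdef]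
    refine (MvPolynomial.totalDegree_add _ _).trans (max_le ?_ ?_)
    · simp [MvPolynomial.totalDegree_C]
    · refine (MvPolynomial.totalDegree_finset_sum _ _).trans ?_
      refine Finset.sup_le fun i _ => ?_
      refine (MvPolynomial.totalDegree_mul _ _).trans ?_
      simp [MvPolynomial.totalDegree_C, MvPolynomial.totalDegree_X]
  have hnonneg : ∀ x ∈ realVariety I, 0 ≤ MvPolynomial.eval x f := by
    intro x hx
    rw [heval x]
    have := hGle x (subset_convexHull ℝ _ hx)
    linarith
  obtain ⟨r, gs, -, hmemI⟩ := hsos f hdeg hnonneg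
  set ε := AdjoinRoot.root ((Polynomial.X : Polynomial ℝ) ^ 2) with hεdef
  set t : ℝ := ∑ i, l i * v i with htdef
  have htpos : 0 < t := by
    have h1 := hlsum v
    have h2 : G (P + v) = G P + G v := map_add _ _ _
    rw [htdef, h1]; linarith
  have hCa : ∀ a : ℝ, φ (Ideal.Quotient.mk I (MvPolynomial.C a)) = algebraMap ℝ (Eps 2) a := by
    intro a
    have h1 : (Ideal.Quotient.mk I) (MvPolynomial.C a)
        = algebraMap ℝ (MvPolynomial (Fin n) ℝ ⧸ I) a := rfl
    rw [h1, φ.commutes]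
  have hφf : φ (Ideal.Quotient.mk I f) = t • ε := by
    rw [hfdef]
    simp only [map_add, map_sum, map_mul, hCa, hφ]
    have expand : ∀ i : Fin n, algebraMap ℝ (Eps 2) (l i)
        * (algebraMap ℝ (Eps 2) (P i) + v i • ε)
        = algebraMap ℝ (Eps 2) (l i * P i) + (l i * v i) • ε := by
      intro i
      rw [mul_add, ← map_mul, Algebra.smul_def, Algebra.smul_def, ← mul_assoc, ← map_mul]
    rw [Finset.sum_congr rfl fun i _ => expand i]
    rw [Finset.sum_add_distrib, ← map_sum, ← Finset.sum_smul, ← add_assoc, ← map_add]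
    have hzero : G P + ∑ i, l i * P i = 0 := by
      rw [hlsum P]; ring
    rw [hzero, map_zero, zero_add, ← htdef]
  have hmkeq : Ideal.Quotient.mk I f = Ideal.Quotient.mk I (∑ i, gs i ^ 2) :=
    Ideal.Quotient.eq.mpr hmemI
  have hsq : t • ε = ∑ i, (φ (Ideal.Quotient.mk I (gs i))) ^ 2 := by
    rw [← hφf, hmkeq, map_sum, map_sum]
    simp [map_pow]
  have hc0 : ∀ i : Fin r, epsC0 (φ (Ideal.Quotient.mk I (gs i))) = 0 := by
    have h1 : ∑ i, (epsC0 (φ (Ideal.Quotient.mk I (gs i)))) ^ 2 = 0 := by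
      have h2 := congrArg epsC0 hsq
      rw [Algebra.smul_def, map_mul, hεdef, epsC0_root, mul_zero, map_sum] at h2
      simpa [map_pow] using h2.symm
    intro i
    have h3 := (Finset.sum_eq_zero_iff_of_nonneg
      (fun i _ => sq_nonneg _)).mp h1 i (Finset.mem_univ i)
    exact pow_eq_zero_iff two_ne_zero |>.mp h3
  have hzero2 : t • ε = 0 := by
    rw [hsq]
    exact Finset.sum_eq_zero fun i _ => epsC0_sq_eq_zero (hc0 i)
  have hε0 : ε = 0 := by
    have h4 := congrArg (fun z => t⁻¹ • z) hzero2
    simpa [smul_smul, inv_mul_cancel₀ (ne_of_gt htpos)] using h4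
  exact aux_root_ne_zero hε0
end

section
/- Let I ⊆ ℝ[x₁,…,xₙ] be an ideal and k ≥ 1. If I is weakly (1,k)-sos, then I is TH_k-exact. -/
open MvPolynomial Polynomial

section Aux

lemma degOne_classify {n : ℕ} (d : Fin n →₀ ℕ) (hd : (d.sum fun _ e => e) ≤ 1) :
    d = 0 ∨ ∃ i, d = Finsupp.single i 1 := by
  by_cases h0 : d = 0
  · exact Or.inl h0
  right
  obtain ⟨i, hi⟩ : ∃ i, d i ≠ 0 := by
    by_contra hc; push_neg at hc; exact h0 (Finsupp.ext fun i => hc i)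
  have hisup : i ∈ d.support := Finsupp.mem_support_iff.2 hi
  have hdi : d i ≤ d.sum fun _ e => e :=
    Finset.single_le_sum (fun _ _ => Nat.zero_le _) hisup
  have h1 : d i = 1 := le_antisymm (hdi.trans hd) (Nat.one_le_iff_ne_zero.2 hi)
  refine ⟨i, Finsupp.ext fun j => ?_⟩
  by_cases hij : j = i
  · subst hij; simp [h1]
  · simp only [Finsupp.single_apply, if_neg (Ne.symm hij)]
    by_contra hj
    have hjsup : j ∈ d.support := Finsupp.mem_support_iff.2 hj
    have hsub : ({i, j} : Finset (Fin n)) ⊆ d.support := by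
      intro x hx; rcases Finset.mem_insert.1 hx with rfl | hx
      · exact hisup
      · rcases Finset.mem_singleton.1 hx with rfl; exact hjsup
    have : d i + d j ≤ d.sum fun _ e => e := by
      rw [Finsupp.sum, ← Finset.sum_pair (Ne.symm hij)]
      exact Finset.sum_le_sum_of_subset hsub
    omega

lemma eval_deg_le_one {n : ℕ} {f : MvPolynomial (Fin n) ℝ} (hf : f.totalDegree ≤ 1)
    (y : Fin n → ℝ) :
    MvPolynomial.eval y f =
      MvPolynomial.coeff 0 f + ∑ i, MvPolynomial.coeff (Finsupp.single i 1) f * y i := by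
  rw [MvPolynomial.eval_eq']
  have hsub : f.support ⊆ insert 0 (Finset.univ.image fun i => Finsupp.single i 1) := by
    intro d hd
    rcases degOne_classify d ((MvPolynomial.le_totalDegree hd).trans hf) with h | ⟨i, h⟩
    · simp [h]
    · exact Finset.mem_insert_of_mem (Finset.mem_image.2 ⟨i, Finset.mem_univ _, h.symm⟩)
  rw [Finset.sum_subset hsub (fun d _ hdns => by
    rw [MvPolynomial.notMem_support_iff.1 hdns, zero_mul])]
  rw [Finset.sum_insert (by
    intro hc
    obtain ⟨i, -, hi⟩ := Finset.mem_image.1 hc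
    exact one_ne_zero (Finsupp.single_eq_zero.1 hi))]
  rw [Finset.sum_image (fun i _ j _ hij => Finsupp.single_left_injective one_ne_zero hij)]
  congr 1
  · simp
  · refine Finset.sum_congr rfl fun i _ => ?_
    congr 1
    simp [Finsupp.single_apply, pow_ite]

lemma stronglyNonnegAt_of_pos {n : ℕ} (I : Ideal (MvPolynomial (Fin n) ℝ)) (P : Fin n → ℝ)
    (f : MvPolynomial (Fin n) ℝ) (hf : 0 < MvPolynomial.eval P f) :
    StronglyNonnegAt I P (Ideal.Quotient.mk I f) := by
  intro m φ hφ
  rcases Nat.eq_zero_or_pos m with hm | hm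
  · subst hm
    left
    have h1 : (1 : Eps 0) = 0 := by
      have := AdjoinRoot.mk_self (f := ((Polynomial.X : Polynomial ℝ) ^ 0))
      simpa using this
    calc φ (Ideal.Quotient.mk I f) = φ (Ideal.Quotient.mk I f) * 1 := (mul_one _).symm
      _ = 0 := by rw [h1, mul_zero]
  · right
    have hmem := hφ f
    rw [Ideal.mem_span_singleton] at hmem
    obtain ⟨z, hz⟩ := hmem
    obtain ⟨s, rfl⟩ := AdjoinRoot.mk_surjective z
    obtain ⟨q, hq⟩ := AdjoinRoot.mk_surjective (φ (Ideal.Quotient.mk I f))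
    refine ⟨q, hq, ?_⟩
    have key : AdjoinRoot.mk ((Polynomial.X : Polynomial ℝ) ^ m)
        (q - Polynomial.C (MvPolynomial.eval P f) - Polynomial.X * s) = 0 := by
      rw [map_sub, map_sub, map_mul, hq, AdjoinRoot.mk_X]
      have hC : AdjoinRoot.mk ((Polynomial.X : Polynomial ℝ) ^ m)
          (Polynomial.C (MvPolynomial.eval P f))
          = algebraMap ℝ (Eps m) (MvPolynomial.eval P f) := by
        rw [AdjoinRoot.algebraMap_eq]; rfl
      rw [hC, hz, sub_self]
    rw [AdjoinRoot.mk_eq_zero] at key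
    obtain ⟨t, ht⟩ := key
    have hc0 : q.coeff 0 = MvPolynomial.eval P f := by
      have h2 := congrArg (fun p : Polynomial ℝ => p.coeff 0) ht
      simp only [Polynomial.coeff_sub, Polynomial.mul_coeff_zero, Polynomial.coeff_X_zero,
        Polynomial.coeff_X_pow, Polynomial.coeff_C_zero, zero_mul, if_neg hm.ne] at h2
      linarith
    have hne : q.coeff 0 ≠ 0 := by rw [hc0]; exact hf.ne'
    have hq0 : q.natTrailingDegree = 0 := Polynomial.natTrailingDegree_eq_zero.2 (Or.inr hne)
    rw [hq0, hc0]; exact hf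

lemma ksos_nonneg {n k : ℕ} {I : Ideal (MvPolynomial (Fin n) ℝ)} {f : MvPolynomial (Fin n) ℝ}
    (hsos : KSosMod I k f) {P : Fin n → ℝ} (hP : P ∈ realVariety I) :
    0 ≤ MvPolynomial.eval P f := by
  obtain ⟨r, g, -, hmem⟩ := hsos
  have h0 := hP _ hmem
  rw [map_sub, sub_eq_zero] at h0
  rw [h0, map_sum]
  exact Finset.sum_nonneg fun i _ => by rw [map_pow]; positivity

end Aux

/-- If `I` is weakly `(1,k)`-sos, then `I` is `TH_k`-exact. -/
theorem thetaExact_of_weaklyOneKSos {n : ℕ} (I : Ideal (MvPolynomial (Fin n) ℝ))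
    (k : ℕ) (hk : 1 ≤ k) (h : WeaklyOneKSos I k) : ThetaExact I k := by
  apply Set.Subset.antisymm
  · -- thetaBody ⊆ closure conv V
    intro x hx
    by_contra hxK
    obtain ⟨L, u, hLx, hK⟩ := geometric_hahn_banach_point_closed
      ((convex_convexHull ℝ (realVariety I)).closure) isClosed_closure hxK
    set c : Fin n → ℝ := fun i => L (Pi.single i 1) with hc
    have hLy : ∀ y : Fin n → ℝ, L y = ∑ i, c i * y i := by
      intro y
      conv_lhs => rw [← Finset.univ_sum_single y]
      rw [map_sum]
      refine Finset.sum_congr rfl fun i _ => ?_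
      have hsingle : Pi.single i (y i) = y i • (Pi.single i 1 : Fin n → ℝ) := by
        rw [← Pi.single_smul, smul_eq_mul, mul_one]
      rw [hsingle, map_smul, smul_eq_mul, mul_comm]
    set F : MvPolynomial (Fin n) ℝ :=
      (∑ i, MvPolynomial.C (c i) * MvPolynomial.X i) - MvPolynomial.C u with hF
    have hFeval : ∀ y : Fin n → ℝ, MvPolynomial.eval y F = L y - u := by
      intro y
      simp only [hF, map_sub, map_sum, map_mul, MvPolynomial.eval_C, MvPolynomial.eval_X]
      rw [hLy y]
    have hFdeg : F.totalDegree ≤ 1 := by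
      have h1 : (∑ i, MvPolynomial.C (c i) * MvPolynomial.X i :
          MvPolynomial (Fin n) ℝ).totalDegree ≤ 1 := by
        refine (MvPolynomial.totalDegree_finset_sum _ _).trans (Finset.sup_le fun i _ => ?_)
        refine (MvPolynomial.totalDegree_mul _ _).trans ?_
        simp [MvPolynomial.totalDegree_C, MvPolynomial.totalDegree_X]
      calc F.totalDegree ≤ max (∑ i, MvPolynomial.C (c i) * MvPolynomial.X i :
            MvPolynomial (Fin n) ℝ).totalDegree
            (-MvPolynomial.C u : MvPolynomial (Fin n) ℝ).totalDegree := by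
              rw [hF, sub_eq_add_neg]; exact MvPolynomial.totalDegree_add _ _
        _ ≤ 1 := max_le h1 (by simp [MvPolynomial.totalDegree_neg, MvPolynomial.totalDegree_C])
    have hsn : StronglyNonneg I (Ideal.Quotient.mk I F) := by
      intro P hP
      apply stronglyNonnegAt_of_pos
      rw [hFeval]
      have := hK P (subset_closure (subset_convexHull ℝ _ hP))
      linarith
    have hsos := h F hFdeg hsn
    have hxF := hx F hFdeg hsos
    rw [hFeval] at hxF
    linarith
  · -- closure conv V ⊆ thetaBody
    intro x hx f hdeg hsos
    set a : ℝ := MvPolynomial.coeff 0 f with ha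
    set b : Fin n → ℝ := fun i => MvPolynomial.coeff (Finsupp.single i 1) f with hb
    have hlin : IsLinearMap ℝ (fun y : Fin n → ℝ => ∑ i, b i * y i) := by
      constructor
      · intro y z
        rw [← Finset.sum_add_distrib]
        exact Finset.sum_congr rfl fun i _ => by simp [mul_add]
      · intro r y
        rw [Finset.smul_sum]
        exact Finset.sum_congr rfl fun i _ => by simp [smul_eq_mul]; ring
    have hconv : Convex ℝ {y : Fin n → ℝ | -a ≤ ∑ i, b i * y i} :=
      convex_halfSpace_ge hlin (-a)
    have hclosed : IsClosed {y : Fin n → ℝ | -a ≤ ∑ i, b i * y i} := by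
      apply isClosed_le continuous_const
      exact continuous_finset_sum _ fun i _ => continuous_const.mul (continuous_apply i)
    have hVsub : realVariety I ⊆ {y : Fin n → ℝ | -a ≤ ∑ i, b i * y i} := by
      intro P hP
      have h0 := ksos_nonneg hsos hP
      rw [eval_deg_le_one hdeg] at h0
      simp only [Set.mem_setOf_eq]
      linarith
    have hxmem := closure_minimal (convexHull_min hVsub hconv) hclosed hx
    rw [eval_deg_le_one hdeg]
    simp only [Set.mem_setOf_eq] at hxmem
    linarith
end

section
/- Let I ⊆ ℝ[x₁,…,xₙ] be a real radical ideal and k ≥ 1. Then the following are equivalent: (1) I is weakly (1,k)-sos; (2) I is (1,k)-sos; (3) I is TH_k-exact. -/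
open MvPolynomial Polynomial

noncomputable section Aux
namespace OO
open Filter Topology Metric Bornology

variable {n : ℕ}

/-- linear polynomial from coefficients -/
def lin (c₀ : ℝ) (c : Fin n → ℝ) : MvPolynomial (Fin n) ℝ :=
  MvPolynomial.C c₀ + ∑ i, MvPolynomial.C (c i) * MvPolynomial.X i

lemma eval_lin (x : Fin n → ℝ) (c₀ : ℝ) (c : Fin n → ℝ) :
    MvPolynomial.eval x (lin c₀ c) = c₀ + ∑ i, c i * x i := by
  simp [lin]

lemma lin_totalDegree (c₀ : ℝ) (c : Fin n → ℝ) : (lin c₀ c).totalDegree ≤ 1 := by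
  refine (MvPolynomial.totalDegree_add _ _).trans ?_
  refine max_le (by simp [MvPolynomial.totalDegree_C]) ?_
  refine (MvPolynomial.totalDegree_finset_sum _ _).trans ?_
  refine Finset.sup_le fun i _ => ?_
  refine (MvPolynomial.totalDegree_mul _ _).trans ?_
  simp [MvPolynomial.totalDegree_C, MvPolynomial.totalDegree_X]


lemma degree_le_one_case {d : Fin n →₀ ℕ} (hd : (d.sum fun _ e => e) ≤ 1) :
    d = 0 ∨ ∃ i, d = Finsupp.single i 1 := by
  by_cases h0 : d = 0
  · exact Or.inl h0
  right
  obtain ⟨i, hi⟩ := Finsupp.support_nonempty_iff.2 h0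
  have hdi : 1 ≤ d i := Nat.one_le_iff_ne_zero.2 (Finsupp.mem_support_iff.1 hi)
  have hsum : ∀ j ∈ d.support, d i ≤ d.sum fun _ e => e := by
    intro j hj
    exact Finset.single_le_sum (f := fun a => d a) (fun _ _ => Nat.zero_le _) hi
  have hsupp : d.support ⊆ {i} := by
    intro j hj
    simp only [Finset.mem_singleton]
    by_contra hji
    have h2 : d i + d j ≤ d.sum fun _ e => e := by
      have : ({i, j} : Finset (Fin n)) ⊆ d.support := by
        intro x hx
        simp only [Finset.mem_insert, Finset.mem_singleton] at hx
        rcases hx with rfl | rfl <;> assumption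
      calc d i + d j = ∑ x ∈ ({i, j} : Finset (Fin n)), d x := by
            rw [Finset.sum_pair (fun h => hji h.symm)]
        _ ≤ d.sum fun _ e => e :=
            Finset.sum_le_sum_of_subset_of_nonneg this (fun _ _ _ => Nat.zero_le _)
    have hdj : 1 ≤ d j := Nat.one_le_iff_ne_zero.2 (Finsupp.mem_support_iff.1 hj)
    omega
  have hds := (Finsupp.support_subset_singleton (a := i)).1 hsupp
  refine ⟨i, ?_⟩
  have h1 : d i ≤ 1 := by
    rw [hds, Finsupp.sum_single_index (by simp)] at hd; exact hd
  have h2 : d i = 1 := le_antisymm h1 hdi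
  rw [hds, h2]


lemma exists_lin {f : MvPolynomial (Fin n) ℝ} (hf : f.totalDegree ≤ 1) :
    f = lin (MvPolynomial.coeff 0 f) (fun i => MvPolynomial.coeff (Finsupp.single i 1) f) := by
  classical
  apply MvPolynomial.ext
  intro d
  have hlin : ∀ (c₀ : ℝ) (c : Fin n → ℝ), MvPolynomial.coeff d (lin c₀ c) =
      (if d = 0 then c₀ else 0)
        + ∑ i, (if d = Finsupp.single i 1 then c i else 0) := by
    intro c₀ c
    simp [lin, MvPolynomial.coeff_C, MvPolynomial.coeff_C_mul, MvPolynomial.coeff_X',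
      MvPolynomial.coeff_sum, eq_comm, mul_ite]
  rw [hlin]
  by_cases h0 : d = 0
  · subst h0
    rw [if_pos rfl]
    rw [Finset.sum_eq_zero, add_zero]
    intro i _
    rw [if_neg (by simp [eq_comm, Finsupp.single_eq_zero])]
  · rw [if_neg h0]
    rcases em (∃ i, d = Finsupp.single i 1) with ⟨i, rfl⟩ | hne
    · rw [Finset.sum_eq_single i]
      · simp
      · intro j _ hj
        rw [if_neg (by
          intro hc
          exact hj ((Finsupp.single_left_inj one_ne_zero).1 hc.symm))]
      · intro h; exact absurd (Finset.mem_univ i) h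
    · have hdf : MvPolynomial.coeff d f = 0 := by
        by_contra hc
        have hmem : d ∈ f.support := MvPolynomial.mem_support_iff.2 hc
        have hdeg := (MvPolynomial.le_totalDegree hmem).trans hf
        rcases degree_le_one_case hdeg with h | ⟨i, rfl⟩
        · exact h0 h
        · exact hne ⟨i, rfl⟩
      rw [hdf]
      rw [Finset.sum_eq_zero, zero_add]
      intro i _
      rw [if_neg (fun hc => hne ⟨i, hc⟩)]

lemma algebraMap_eps_eq (m : ℕ) (a : ℝ) :
    algebraMap ℝ (Eps m) a = AdjoinRoot.mk _ (Polynomial.C a) := by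
  rw [AdjoinRoot.algebraMap_eq]; rfl

lemma epsNonneg_of_pos {m : ℕ} {z : Eps m} {a : ℝ} (ha : 0 < a)
    (hz : z - algebraMap ℝ (Eps m) a ∈
      Ideal.span {AdjoinRoot.root ((Polynomial.X : Polynomial ℝ) ^ m)}) :
    EpsNonneg z := by
  rw [Ideal.mem_span_singleton] at hz
  obtain ⟨w, hw⟩ := hz
  obtain ⟨q, rfl⟩ := AdjoinRoot.mk_surjective w
  have hc : (Polynomial.C a + Polynomial.X * q).coeff 0 = a := by
    simp [Polynomial.mul_coeff_zero]
  have hnt : (Polynomial.C a + Polynomial.X * q).natTrailingDegree = 0 :=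
    Polynomial.natTrailingDegree_eq_zero.2 (Or.inr (by rw [hc]; exact ha.ne'))
  refine Or.inr ⟨Polynomial.C a + Polynomial.X * q, ?_, ?_⟩
  · have hz' : z = algebraMap ℝ (Eps m) a + AdjoinRoot.root _ * AdjoinRoot.mk _ q := by
      rw [← hw]; ring
    rw [hz', map_add, map_mul, AdjoinRoot.mk_C, AdjoinRoot.mk_X, AdjoinRoot.algebraMap_eq]
  · rw [hnt, hc]; exact ha

lemma not_epsNonneg_of_neg {a : ℝ} (ha : a < 0) :
    ¬ EpsNonneg (algebraMap ℝ (Eps 1) a) := by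
  rw [algebraMap_eps_eq]
  rintro (h0 | ⟨p, hp, hpos⟩)
  · rw [AdjoinRoot.mk_eq_zero, pow_one, Polynomial.X_dvd_iff, Polynomial.coeff_C_zero] at h0
    exact ha.ne h0
  · rw [AdjoinRoot.mk_eq_mk, pow_one, Polynomial.X_dvd_iff, Polynomial.coeff_sub,
      Polynomial.coeff_C_zero, sub_eq_zero] at hp
    by_cases hp0 : p = 0
    · rw [hp0] at hpos; simp at hpos
    · have hnt : p.natTrailingDegree = 0 :=
        Polynomial.natTrailingDegree_eq_zero.2 (Or.inr (by rw [hp]; exact ha.ne))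
      rw [hnt, hp] at hpos
      exact absurd hpos (not_lt.2 ha.le)

lemma aeval_eq_eval (P : Fin n → ℝ) (p : MvPolynomial (Fin n) ℝ) :
    MvPolynomial.aeval P p = MvPolynomial.eval P p := by
  rw [MvPolynomial.aeval_def, MvPolynomial.eval, ← MvPolynomial.coe_eval₂Hom,
    ← MvPolynomial.aeval_eq_eval₂Hom]
  rfl

lemma strongly_nonneg_imp_nonneg {I : Ideal (MvPolynomial (Fin n) ℝ)}
    {f : MvPolynomial (Fin n) ℝ} (hs : StronglyNonneg I (Ideal.Quotient.mk I f)) :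
    ∀ P ∈ realVariety I, 0 ≤ MvPolynomial.eval P f := by
  intro P hP
  by_contra hneg
  push_neg at hneg
  have hkill : ∀ p ∈ I, (MvPolynomial.aeval P) p = (0 : ℝ) := by
    intro p hp; rw [aeval_eq_eval]; exact hP p hp
  set φ0 : (MvPolynomial (Fin n) ℝ ⧸ I) →ₐ[ℝ] ℝ :=
    Ideal.Quotient.liftₐ I (MvPolynomial.aeval P) hkill with hφ0
  set φ : (MvPolynomial (Fin n) ℝ ⧸ I) →ₐ[ℝ] Eps 1 := (Algebra.ofId ℝ (Eps 1)).comp φ0 with hφdef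
  have hval : ∀ p : MvPolynomial (Fin n) ℝ,
      φ (Ideal.Quotient.mk I p) = algebraMap ℝ (Eps 1) (MvPolynomial.eval P p) := by
    intro p
    rw [hφdef]
    simp only [AlgHom.comp_apply, hφ0, Ideal.Quotient.liftₐ_apply, Ideal.Quotient.lift_mk,
      Algebra.ofId_apply]
    exact congrArg _ (aeval_eq_eval P p)
  have hAt : AtPoint I P φ := by
    intro p
    rw [hval p, sub_self]
    exact Ideal.zero_mem _
  have hEN := hs P hP 1 φ hAt
  rw [hval f] at hEN
  exact not_epsNonneg_of_neg hneg hEN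

lemma strongly_nonneg_of_pos {I : Ideal (MvPolynomial (Fin n) ℝ)}
    {f : MvPolynomial (Fin n) ℝ} (h : ∀ P ∈ realVariety I, 0 < MvPolynomial.eval P f) :
    StronglyNonneg I (Ideal.Quotient.mk I f) :=
  fun P hP _m φ hφ => epsNonneg_of_pos (h P hP) (hφ f)


lemma expand_sq {d : ℕ} (e : Fin d → MvPolynomial (Fin n) ℝ) (v : Fin d → ℝ) :
    (∑ l, v l • e l) ^ 2 = ∑ l, ∑ l', (v l * v l') • (e l * e l') := by
  rw [sq, Finset.sum_mul_sum]
  exact Finset.sum_congr rfl fun l _ => Finset.sum_congr rfl fun l' _ =>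
    (smul_mul_smul_comm _ _ _ _)

lemma sum_sq_expand {d s : ℕ} (e : Fin d → MvPolynomial (Fin n) ℝ) (C : Fin s → Fin d → ℝ) :
    ∑ i, (∑ l, C i l • e l) ^ 2
      = ∑ l, ∑ l', (((Matrix.of C).conjTranspose * Matrix.of C) l l') • (e l * e l') := by
  calc ∑ i, (∑ l, C i l • e l) ^ 2
      = ∑ i, ∑ l, ∑ l', (C i l * C i l') • (e l * e l') := by
        exact Finset.sum_congr rfl fun i _ => expand_sq e (C i)
    _ = ∑ l, ∑ l', ∑ i, (C i l * C i l') • (e l * e l') := by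
        rw [Finset.sum_comm]
        exact Finset.sum_congr rfl fun l _ => Finset.sum_comm
    _ = ∑ l, ∑ l', (∑ i, C i l * C i l') • (e l * e l') := by
        exact Finset.sum_congr rfl fun l _ => Finset.sum_congr rfl fun l' _ =>
          (Finset.sum_smul).symm
    _ = ∑ l, ∑ l', (((Matrix.of C).conjTranspose * Matrix.of C) l l') • (e l * e l') := by
        refine Finset.sum_congr rfl fun l _ => Finset.sum_congr rfl fun l' _ => ?_
        have hme : ((Matrix.of C).conjTranspose * Matrix.of C) l l' = ∑ i, C i l * C i l' := by
          rw [Matrix.mul_apply]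
          exact Finset.sum_congr rfl fun i _ => by
            simp [Matrix.conjTranspose_apply, Matrix.of_apply]
        rw [hme]

lemma sum_sq_gram {d r : ℕ} (e : Fin d → MvPolynomial (Fin n) ℝ) (A : Fin r → Fin d → ℝ) :
    ∃ B : Fin d → Fin d → ℝ,
      ∑ i, (∑ l, A i l • e l) ^ 2 = ∑ j, (∑ l, B j l • e l) ^ 2 := by
  classical
  obtain ⟨Bm, hBm⟩ : ∃ Bm : Matrix (Fin d) (Fin d) ℝ,
      (Matrix.of A).conjTranspose * Matrix.of A = Bm.conjTranspose * Bm := by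
    open scoped MatrixOrder Matrix.Norms.L2Operator in
    obtain ⟨B, hB⟩ := CStarAlgebra.nonneg_iff_eq_star_mul_self.mp
      (Matrix.posSemidef_conjTranspose_mul_self (Matrix.of A)).nonneg
    exact ⟨B, hB⟩
  refine ⟨fun j l => Bm j l, ?_⟩
  rw [sum_sq_expand e A, sum_sq_expand e (fun j l => Bm j l)]
  have hof : Matrix.of (fun j l => Bm j l) = Bm := rfl
  rw [hof, ← hBm]

lemma closed_range_of_quadratic {E F : Type*} [NormedAddCommGroup E] [NormedSpace ℝ E]
    [FiniteDimensional ℝ E] [NormedAddCommGroup F] [NormedSpace ℝ F]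
    (Φ : E → F) (hc : Continuous Φ) (hh : ∀ (t : ℝ) (a : E), Φ (t • a) = (t ^ 2) • Φ a)
    (h0 : ∀ a, Φ a = 0 → a = 0) : IsClosed (Set.range Φ) := by
  have hproper : ProperSpace E := FiniteDimensional.proper ℝ E
  rw [← isSeqClosed_iff_isClosed]
  intro x y hx hxy
  choose a ha using hx
  by_cases hbdd : ∃ R, ∀ m, ‖a m‖ ≤ R
  · obtain ⟨R, hR⟩ := hbdd
    obtain ⟨l, -, σ, hσ, hconv⟩ := tendsto_subseq_of_bounded
      (isBounded_closedBall (x := (0 : E)) (r := R))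
      (x := a) (fun m => by simpa [Metric.mem_closedBall, dist_zero_right] using hR m)
    refine ⟨l, ?_⟩
    have h1 : Tendsto (fun j => Φ (a (σ j))) atTop (𝓝 (Φ l)) :=
      (hc.tendsto l).comp hconv
    have h2 : Tendsto (fun j => Φ (a (σ j))) atTop (𝓝 y) := by
      have heq : (fun j => Φ (a (σ j))) = fun j => x (σ j) := by
        funext j; rw [ha (σ j)]
      rw [heq]
      exact hxy.comp hσ.tendsto_atTop
    exact tendsto_nhds_unique h1 h2
  · exfalso
    push_neg at hbdd
    choose sel hsel using fun R : ℝ => hbdd R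
    set b : ℕ → E := fun m => a (sel (m : ℝ)) with hbdef
    have hbnorm : ∀ m : ℕ, (m : ℝ) < ‖b m‖ := fun m => hsel (m : ℝ)
    have hb0 : ∀ m : ℕ, ‖b m‖ ≠ 0 := by
      intro m h
      have h2 := hbnorm m
      rw [h] at h2
      exact absurd h2 (not_lt.2 (Nat.cast_nonneg m))
    have hselt : Tendsto (fun m : ℕ => sel (m : ℝ)) atTop atTop := by
      rw [Filter.tendsto_atTop]
      intro N
      set M : ℕ := (Finset.range N).sup (fun j => ⌈‖a j‖⌉₊) with hM
      filter_upwards [eventually_ge_atTop M] with m hm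
      by_contra hcon
      push_neg at hcon
      have hmem : sel (m : ℝ) ∈ Finset.range N := Finset.mem_range.2 hcon
      have h1 : ‖a (sel (m : ℝ))‖ ≤ (M : ℝ) := by
        refine (Nat.le_ceil _).trans ?_
        exact_mod_cast Nat.cast_le.2 (Finset.le_sup (f := fun j => ⌈‖a j‖⌉₊) hmem)
      have h2 : (m : ℝ) < (M : ℝ) := lt_of_lt_of_le (hbnorm m) h1
      have h3 : m < M := by exact_mod_cast h2
      omega
    set s : ℕ → E := fun m => ‖b m‖⁻¹ • b m with hsdef
    have hs1 : ∀ m, s m ∈ Metric.sphere (0 : E) 1 := by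
      intro m
      rw [mem_sphere_zero_iff_norm, hsdef]
      rw [norm_smul, norm_inv, norm_norm]
      exact inv_mul_cancel₀ (hb0 m)
    obtain ⟨l, hl, σ, hσ, hconv⟩ := (isCompact_sphere (0 : E) 1).tendsto_subseq hs1
    have hΦs : ∀ m, Φ (s m) = (‖b m‖⁻¹) ^ 2 • x (sel (m : ℝ)) := by
      intro m
      rw [hsdef]
      simp only []
      rw [hh, ha]
    have h3 : Tendsto (fun m => Φ (s m)) atTop (𝓝 0) := by
      have hnt : Tendsto (fun m : ℕ => ‖b m‖) atTop atTop :=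
        tendsto_atTop_mono (fun m => (hbnorm m).le) tendsto_natCast_atTop_atTop
      have hinv : Tendsto (fun m : ℕ => ‖b m‖⁻¹) atTop (𝓝 0) := hnt.inv_tendsto_atTop
      have hinv2 : Tendsto (fun m : ℕ => (‖b m‖⁻¹) ^ 2) atTop (𝓝 0) := by
        simpa using hinv.pow 2
      have hxsel : Tendsto (fun m : ℕ => x (sel (m : ℝ))) atTop (𝓝 y) := hxy.comp hselt
      have := hinv2.smul hxsel
      rw [zero_smul] at this
      simpa only [hΦs] using this
    have h4 : Tendsto (fun j => Φ (s (σ j))) atTop (𝓝 (Φ l)) := (hc.tendsto l).comp hconv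
    have h5 : Tendsto (fun j => Φ (s (σ j))) atTop (𝓝 0) := h3.comp hσ.tendsto_atTop
    have h6 : Φ l = 0 := tendsto_nhds_unique h4 h5
    have h7 : l = 0 := h0 l h6
    rw [mem_sphere_zero_iff_norm, h7, norm_zero] at hl
    exact one_ne_zero hl.symm

set_option maxHeartbeats 2000000 in
set_option synthInstance.maxHeartbeats 400000 in
lemma isClosed_linKSos (I : Ideal (MvPolynomial (Fin n) ℝ)) (k : ℕ)
    (hrad : IsRealRadical I) (hk : 1 ≤ k) :
    IsClosed {v : ℝ × (Fin n → ℝ) | KSosMod I k (lin v.1 v.2)} := by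
  classical
  obtain ⟨Wk, hmemWk, hfdWk⟩ : ∃ Wk : Submodule ℝ (MvPolynomial (Fin n) ℝ),
      (∀ p : MvPolynomial (Fin n) ℝ, p ∈ Wk ↔ p.totalDegree ≤ k) ∧
        FiniteDimensional ℝ ↥Wk :=
    ⟨MvPolynomial.restrictTotalDegree (Fin n) ℝ k,
      fun p => MvPolynomial.mem_restrictTotalDegree (Fin n) k p, inferInstance⟩
  obtain ⟨W2, hmemW2, hfdW2⟩ : ∃ W2 : Submodule ℝ (MvPolynomial (Fin n) ℝ),
      (∀ p : MvPolynomial (Fin n) ℝ, p ∈ W2 ↔ p.totalDegree ≤ 2 * k) ∧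
        FiniteDimensional ℝ ↥W2 :=
    ⟨MvPolynomial.restrictTotalDegree (Fin n) ℝ (2 * k),
      fun p => MvPolynomial.mem_restrictTotalDegree (Fin n) (2 * k) p, inferInstance⟩
  haveI := hfdWk
  haveI := hfdW2
  set J1 : Submodule ℝ ↥Wk := (Submodule.restrictScalars ℝ I).comap Wk.subtype with hJ1
  obtain ⟨K1, hK1⟩ := J1.exists_isCompl
  haveI : Module.Free ℝ ↥K1 := Module.Free.of_divisionRing ℝ ↥K1
  set d1 := Module.finrank ℝ ↥K1 with hd1
  set b1 : Module.Basis (Fin d1) ℝ ↥K1 := Module.finBasis ℝ ↥K1 with hb1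
  set J2 : Submodule ℝ ↥W2 := (Submodule.restrictScalars ℝ I).comap W2.subtype with hJ2
  obtain ⟨K2, hK2⟩ := J2.exists_isCompl
  haveI : Module.Free ℝ ↥K2 := Module.Free.of_divisionRing ℝ ↥K2
  set d2 := Module.finrank ℝ ↥K2 with hd2
  set b2 : Module.Basis (Fin d2) ℝ ↥K2 := Module.finBasis ℝ ↥K2 with hb2
  set π : ↥W2 →ₗ[ℝ] ↥K2 := K2.linearProjOfIsCompl J2 hK2.symm with hπ
  set ψ : ↥W2 →ₗ[ℝ] (Fin d2 → ℝ) :=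
    (b2.equivFun : ↥K2 ≃ₗ[ℝ] (Fin d2 → ℝ)).toLinearMap.comp π with hψ
  have hker : ∀ w : ↥W2, ψ w = 0 ↔ (w : MvPolynomial (Fin n) ℝ) ∈ I := by
    intro w
    constructor
    · intro h
      have h1 : π w = 0 := by
        rw [hψ, LinearMap.comp_apply, LinearEquiv.coe_coe,
          LinearEquiv.map_eq_zero_iff] at h
        exact h
      have h2 : w ∈ J2 := by
        rw [← Submodule.linearProjOfIsCompl_ker (p := K2) (q := J2) hK2.symm,
          LinearMap.mem_ker]
        exact h1
      rw [hJ2, Submodule.mem_comap] at h2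
      rwa [Submodule.restrictScalars_mem] at h2
    · intro h
      have h2 : w ∈ J2 := by
        rw [hJ2, Submodule.mem_comap, Submodule.restrictScalars_mem]
        exact h
      have h1 : π w = 0 := Submodule.linearProjOfIsCompl_apply_right' hK2.symm h2
      rw [hψ, LinearMap.comp_apply, h1, map_zero]
  have hkerdiff : ∀ w w' : ↥W2, ψ w = ψ w' ↔
      ((w : MvPolynomial (Fin n) ℝ) - (w' : MvPolynomial (Fin n) ℝ) ∈ I) := by
    intro w w'
    rw [← sub_eq_zero, ← map_sub, hker]
    rfl
  set B : Fin d1 → MvPolynomial (Fin n) ℝ :=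
    fun l => ((b1 l : ↥Wk) : MvPolynomial (Fin n) ℝ) with hB
  have hBdeg : ∀ l, (B l).totalDegree ≤ k := by
    intro l
    exact (hmemWk _).1 (b1 l : ↥Wk).2
  set pg : (Fin d1 → ℝ) → MvPolynomial (Fin n) ℝ := fun v => ∑ l, v l • B l with hpg
  have hpgdeg : ∀ v, (pg v).totalDegree ≤ k := by
    intro v
    refine (MvPolynomial.totalDegree_finset_sum _ _).trans ?_
    exact Finset.sup_le fun l _ => (MvPolynomial.totalDegree_smul_le _ _).trans (hBdeg l)
  set cmap : ↥K1 →ₗ[ℝ] MvPolynomial (Fin n) ℝ := Wk.subtype.comp K1.subtype with hcmap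
  have hcoe : ∀ v : Fin d1 → ℝ, cmap (b1.equivFun.symm v) = pg v := by
    intro v
    rw [Module.Basis.equivFun_symm_apply, map_sum]
    exact Finset.sum_congr rfl fun l _ => by rw [map_smul]; rfl
  have hmul2 : ∀ p q : MvPolynomial (Fin n) ℝ,
      p.totalDegree ≤ k → q.totalDegree ≤ k → p * q ∈ W2 := by
    intro p q hp hq
    rw [hmemW2]
    calc (p * q).totalDegree ≤ p.totalDegree + q.totalDegree :=
          MvPolynomial.totalDegree_mul _ _
      _ ≤ k + k := add_le_add hp hq
      _ = 2 * k := (two_mul k).symm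
  have hsq2 : ∀ v, (pg v) ^ 2 ∈ W2 := fun v => by
    rw [sq]; exact hmul2 _ _ (hpgdeg v) (hpgdeg v)
  have hsum2 : ∀ a : Fin d1 → Fin d1 → ℝ, (∑ j, (pg (a j)) ^ 2) ∈ W2 :=
    fun a => Submodule.sum_mem _ fun j _ => hsq2 _
  have hlin2 : ∀ v : ℝ × (Fin n → ℝ), lin v.1 v.2 ∈ W2 := by
    intro v
    rw [hmemW2]
    exact (lin_totalDegree _ _).trans (by omega)
  set Φ : (Fin d1 → Fin d1 → ℝ) → (Fin d2 → ℝ) :=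
    fun a => ψ ⟨∑ j, (pg (a j)) ^ 2, hsum2 a⟩ with hΦ
  have hΦformula : Φ = fun a => ∑ j : Fin d1, ∑ l : Fin d1, ∑ l' : Fin d1,
      (a j l * a j l') • ψ ⟨B l * B l', hmul2 _ _ (hBdeg l) (hBdeg l')⟩ := by
    funext a
    simp only [hΦ]
    have hsub : (⟨∑ j, (pg (a j)) ^ 2, hsum2 a⟩ : ↥W2)
        = ∑ j : Fin d1, ∑ l, ∑ l', (a j l * a j l') •
            (⟨B l * B l', hmul2 _ _ (hBdeg l) (hBdeg l')⟩ : ↥W2) := by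
      apply Subtype.ext
      simp only [AddSubmonoidClass.coe_finset_sum, SetLike.val_smul]
      exact Finset.sum_congr rfl fun j _ => expand_sq B (a j)
    rw [hsub]
    simp only [map_sum, map_smul]
  have hΦcont : Continuous Φ := by
    rw [hΦformula]
    refine continuous_finset_sum _ fun j _ => continuous_finset_sum _ fun l _ =>
      continuous_finset_sum _ fun l' _ => ?_
    fun_prop
  have hΦhom : ∀ (t : ℝ) (a : Fin d1 → Fin d1 → ℝ), Φ (t • a) = (t ^ 2) • Φ a := by
    intro t a
    rw [hΦformula]
    simp only [Pi.smul_apply, smul_eq_mul]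
    rw [Finset.smul_sum]
    refine Finset.sum_congr rfl fun j _ => ?_
    rw [Finset.smul_sum]
    refine Finset.sum_congr rfl fun l _ => ?_
    rw [Finset.smul_sum]
    refine Finset.sum_congr rfl fun l' _ => ?_
    rw [smul_smul]
    congr 1
    ring
  have hΦzero : ∀ a, Φ a = 0 → a = 0 := by
    intro a hazero
    simp only [hΦ] at hazero
    have hmemI : (∑ j, (pg (a j)) ^ 2) ∈ I := (hker ⟨_, hsum2 a⟩).1 hazero
    have hpgI : ∀ j, pg (a j) ∈ I := by
      intro j
      apply hrad
      refine ⟨1, le_refl 1, d1, fun j' => if j' = j then 0 else pg (a j'), ?_⟩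
      have hkey : pg (a j) ^ (2 * 1) + ∑ j', (if j' = j then 0 else pg (a j')) ^ 2
          = ∑ j', (pg (a j')) ^ 2 := by
        rw [← Finset.add_sum_erase _ (fun j' => (pg (a j')) ^ 2) (Finset.mem_univ j)]
        rw [← Finset.add_sum_erase _
          (fun j' => (if j' = j then 0 else pg (a j')) ^ 2) (Finset.mem_univ j)]
        rw [if_pos rfl]
        have h2 : ∑ j' ∈ Finset.univ.erase j, (if j' = j then 0 else pg (a j')) ^ 2
            = ∑ j' ∈ Finset.univ.erase j, (pg (a j')) ^ 2 :=
          Finset.sum_congr rfl fun j' hj' => by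
            rw [if_neg (Finset.ne_of_mem_erase hj')]
        rw [h2]
        norm_num
      rw [hkey]
      exact hmemI
    funext j
    have huJ : ((b1.equivFun.symm (a j) : ↥K1) : ↥Wk) ∈ J1 := by
      rw [hJ1, Submodule.mem_comap, Submodule.restrictScalars_mem]
      have : Wk.subtype ((b1.equivFun.symm (a j) : ↥K1) : ↥Wk) = cmap (b1.equivFun.symm (a j)) := rfl
      rw [this, hcoe]
      exact hpgI j
    have huK : ((b1.equivFun.symm (a j) : ↥K1) : ↥Wk) ∈ K1 := (b1.equivFun.symm (a j)).2
    have h0 : ((b1.equivFun.symm (a j) : ↥K1) : ↥Wk) = 0 :=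
      Submodule.disjoint_def.1 hK1.disjoint _ huJ huK
    have h1 : (b1.equivFun.symm (a j) : ↥K1) = 0 := by
      exact_mod_cast h0
    have h3 : a j = b1.equivFun (b1.equivFun.symm (a j)) :=
      (b1.equivFun.apply_symm_apply (a j)).symm
    rw [h1, b1.equivFun.map_zero] at h3
    exact h3
  have hXmem : ∀ i, (MvPolynomial.X i : MvPolynomial (Fin n) ℝ) ∈ W2 := by
    intro i
    rw [hmemW2, MvPolynomial.totalDegree_X]
    omega
  have hOnemem : (1 : MvPolynomial (Fin n) ℝ) ∈ W2 := by
    rw [hmemW2, MvPolynomial.totalDegree_one]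
    omega
  set L : ℝ × (Fin n → ℝ) → (Fin d2 → ℝ) := fun v => ψ ⟨lin v.1 v.2, hlin2 v⟩ with hL
  have hLform : L = fun v => v.1 • ψ ⟨1, hOnemem⟩ +
      ∑ i, v.2 i • ψ ⟨MvPolynomial.X i, hXmem i⟩ := by
    funext v
    simp only [hL]
    have hsub : (⟨lin v.1 v.2, hlin2 v⟩ : ↥W2)
        = v.1 • (⟨1, hOnemem⟩ : ↥W2) + ∑ i, v.2 i • (⟨MvPolynomial.X i, hXmem i⟩ : ↥W2) := by
      apply Subtype.ext
      simp only [Submodule.coe_add, SetLike.val_smul, AddSubmonoidClass.coe_finset_sum]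
      show lin v.1 v.2 = v.1 • (1 : MvPolynomial (Fin n) ℝ) + ∑ i, v.2 i • MvPolynomial.X i
      rw [lin]
      congr 1
      · rw [MvPolynomial.smul_eq_C_mul, mul_one]
      · exact Finset.sum_congr rfl fun i _ => (MvPolynomial.smul_eq_C_mul _ _).symm
    rw [hsub, map_add, map_smul, map_sum]
    simp only [map_smul]
  have hLcont : Continuous L := by
    rw [hLform]
    refine (continuous_fst.smul continuous_const).add
      (continuous_finset_sum _ fun i _ => ?_)
    exact ((continuous_apply i).comp continuous_snd).smul continuous_const
  have hchar : {v : ℝ × (Fin n → ℝ) | KSosMod I k (lin v.1 v.2)} = L ⁻¹' (Set.range Φ) := by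
    ext v
    simp only [Set.mem_setOf_eq, Set.mem_preimage, Set.mem_range]
    constructor
    · rintro ⟨r, g, hdeg, hmem⟩
      set ρ : ↥Wk →ₗ[ℝ] ↥K1 := K1.linearProjOfIsCompl J1 hK1.symm with hρ
      set gW : Fin r → ↥Wk := fun i => ⟨g i, (hmemWk _).2 (hdeg i)⟩ with hgW
      set κ : Fin r → ↥K1 := fun i => ρ (gW i) with hκ
      have hδ : ∀ i, g i - cmap (κ i) ∈ I := by
        intro i
        have h1 : gW i - K1.subtype (κ i) ∈ J1 := by
          have h2 : ρ (gW i - K1.subtype (κ i)) = 0 := by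
            rw [map_sub]
            have h3 : ρ (K1.subtype (κ i)) = κ i :=
              Submodule.linearProjOfIsCompl_apply_left hK1.symm (κ i)
            rw [h3, hκ, sub_self]
          rw [← Submodule.linearProjOfIsCompl_ker (p := K1) (q := J1) hK1.symm]
          exact LinearMap.mem_ker.2 h2
        rw [hJ1, Submodule.mem_comap, Submodule.restrictScalars_mem] at h1
        have h4 : Wk.subtype (gW i - K1.subtype (κ i)) = g i - cmap (κ i) := by
          rw [map_sub]; rfl
        rwa [h4] at h1
      have hmod : (∑ i, (g i) ^ 2) - (∑ i, (cmap (κ i)) ^ 2) ∈ I := by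
        rw [← Finset.sum_sub_distrib]
        refine Submodule.sum_mem _ fun i _ => ?_
        have h5 : (g i) ^ 2 - (cmap (κ i)) ^ 2
            = (g i - cmap (κ i)) * (g i + cmap (κ i)) := by ring
        rw [h5]
        exact Ideal.mul_mem_right _ _ (hδ i)
      set A : Fin r → Fin d1 → ℝ := fun i => b1.equivFun (κ i) with hA
      have hκA : ∀ i, cmap (κ i) = pg (A i) := by
        intro i
        rw [← hcoe (A i), hA]
        congr 1
        rw [LinearEquiv.symm_apply_apply]
      obtain ⟨Bm, hBm⟩ := sum_sq_gram B A
      refine ⟨Bm, ?_⟩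
      have htot : lin v.1 v.2 - ∑ j, (pg (Bm j)) ^ 2 ∈ I := by
        have h2 : (∑ i, (cmap (κ i)) ^ 2) = ∑ j, (pg (Bm j)) ^ 2 := by
          rw [Finset.sum_congr rfl fun i (_ : i ∈ Finset.univ) => by rw [hκA i]]
          exact hBm
        rw [← h2]
        have h6 := Ideal.add_mem I hmem hmod
        have h7 : lin v.1 v.2 - ∑ i, (g i) ^ 2 + ((∑ i, (g i) ^ 2) - ∑ i, (cmap (κ i)) ^ 2)
            = lin v.1 v.2 - ∑ i, (cmap (κ i)) ^ 2 := by ring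
        rwa [h7] at h6
      simp only [hΦ, hL]
      refine (hkerdiff ⟨∑ j, (pg (Bm j)) ^ 2, hsum2 Bm⟩ ⟨lin v.1 v.2, hlin2 v⟩).2 ?_
      have h8 : (((⟨∑ j, (pg (Bm j)) ^ 2, hsum2 Bm⟩ : ↥W2) : MvPolynomial (Fin n) ℝ))
          - ((⟨lin v.1 v.2, hlin2 v⟩ : ↥W2) : MvPolynomial (Fin n) ℝ)
          = -(lin v.1 v.2 - ∑ j, (pg (Bm j)) ^ 2) := by ring
      rw [h8]
      exact neg_mem htot
    · rintro ⟨a, ha⟩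
      refine ⟨d1, fun j => pg (a j), fun j => hpgdeg _, ?_⟩
      simp only [hΦ, hL] at ha
      have h9 := (hkerdiff ⟨lin v.1 v.2, hlin2 v⟩ ⟨∑ j, (pg (a j)) ^ 2, hsum2 a⟩).1 ha.symm
      exact h9
  rw [hchar]
  exact (closed_range_of_quadratic Φ hΦcont hΦhom hΦzero).preimage hLcont


variable {I : Ideal (MvPolynomial (Fin n) ℝ)} {k : ℕ}

lemma ksos_eval_nonneg {f : MvPolynomial (Fin n) ℝ} (h : KSosMod I k f)
    {P : Fin n → ℝ} (hP : P ∈ realVariety I) : 0 ≤ MvPolynomial.eval P f := by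
  obtain ⟨r, g, _, hmem⟩ := h
  have h0 : MvPolynomial.eval P (f - ∑ i, (g i) ^ 2) = 0 := hP _ hmem
  rw [map_sub, sub_eq_zero] at h0
  rw [h0, map_sum]
  exact Finset.sum_nonneg fun i _ => by rw [map_pow]; positivity

lemma ksos_of_mem {f : MvPolynomial (Fin n) ℝ} (hf : f ∈ I) : KSosMod I k f :=
  ⟨0, fun i => 0, fun i => i.elim0, by simpa using hf⟩

lemma ksos_zero : KSosMod I k (0 : MvPolynomial (Fin n) ℝ) := ksos_of_mem (Ideal.zero_mem I)

lemma ksos_one : KSosMod I k (1 : MvPolynomial (Fin n) ℝ) :=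
  ⟨1, fun _ => 1, fun _ => by simp, by simp⟩

lemma ksos_add {f g : MvPolynomial (Fin n) ℝ} (hf : KSosMod I k f) (hg : KSosMod I k g) :
    KSosMod I k (f + g) := by
  obtain ⟨r₁, g₁, hd₁, hm₁⟩ := hf
  obtain ⟨r₂, g₂, hd₂, hm₂⟩ := hg
  refine ⟨r₁ + r₂, Fin.append g₁ g₂, ?_, ?_⟩
  · intro i
    refine Fin.addCases (fun j => ?_) (fun j => ?_) i
    · rw [Fin.append_left]; exact hd₁ j
    · rw [Fin.append_right]; exact hd₂ j
  · have hsum : ∑ i : Fin (r₁ + r₂), (Fin.append g₁ g₂ i) ^ 2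
        = (∑ i, (g₁ i) ^ 2) + ∑ i, (g₂ i) ^ 2 := by
      rw [Fin.sum_univ_add]
      congr 1
      · exact Finset.sum_congr rfl fun j _ => by rw [Fin.append_left]
      · exact Finset.sum_congr rfl fun j _ => by rw [Fin.append_right]
    rw [hsum]
    have heq : f + g - ((∑ i, (g₁ i) ^ 2) + ∑ i, (g₂ i) ^ 2)
        = (f - ∑ i, (g₁ i) ^ 2) + (g - ∑ i, (g₂ i) ^ 2) := by ring
    rw [heq]
    exact Ideal.add_mem I hm₁ hm₂

lemma ksos_smul {t : ℝ} (ht : 0 ≤ t) {f : MvPolynomial (Fin n) ℝ} (hf : KSosMod I k f) :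
    KSosMod I k (t • f) := by
  obtain ⟨r, g, hd, hm⟩ := hf
  refine ⟨r, fun i => Real.sqrt t • g i, ?_, ?_⟩
  · intro i
    exact (MvPolynomial.totalDegree_smul_le _ _).trans (hd i)
  · have hsq : ∀ i : Fin r, (Real.sqrt t • g i) ^ 2 = t • (g i) ^ 2 := by
      intro i
      rw [_root_.smul_pow, Real.sq_sqrt ht]
    simp only [hsq]
    rw [← Finset.smul_sum, ← smul_sub]
    rw [MvPolynomial.smul_eq_C_mul]
    exact Ideal.mul_mem_left I _ hm

lemma nonneg_on_closure_hull {c₀ : ℝ} {c : Fin n → ℝ}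
    (hnn : ∀ P ∈ realVariety I, 0 ≤ MvPolynomial.eval P (lin c₀ c)) :
    ∀ x ∈ closure (convexHull ℝ (realVariety I)), 0 ≤ MvPolynomial.eval x (lin c₀ c) := by
  have hSc : IsClosed {y : Fin n → ℝ | 0 ≤ c₀ + ∑ i, c i * y i} := by
    have hcont : Continuous fun y : Fin n → ℝ => c₀ + ∑ i, c i * y i := by
      refine continuous_const.add (continuous_finset_sum _ fun i _ => ?_)
      exact continuous_const.mul (continuous_apply i)
    exact isClosed_le continuous_const hcont
  have hSconv : Convex ℝ {y : Fin n → ℝ | 0 ≤ c₀ + ∑ i, c i * y i} := by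
    intro y hy z hz a b ha hb hab
    simp only [Set.mem_setOf_eq] at hy hz ⊢
    have hkey : c₀ + ∑ i, c i * (a • y + b • z) i
        = a * (c₀ + ∑ i, c i * y i) + b * (c₀ + ∑ i, c i * z i) := by
      simp only [Pi.add_apply, Pi.smul_apply, smul_eq_mul]
      rw [Finset.sum_congr rfl (fun i _ => show c i * (a * y i + b * z i)
        = a * (c i * y i) + b * (c i * z i) by ring), Finset.sum_add_distrib,
        ← Finset.mul_sum, ← Finset.mul_sum]
      have h1 : a * c₀ + b * c₀ = c₀ := by rw [← add_mul, hab, one_mul]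
      linear_combination (-1 : ℝ) * h1
    rw [hkey]
    exact add_nonneg (mul_nonneg ha hy) (mul_nonneg hb hz)
  intro x hx
  rw [eval_lin]
  have hVS : realVariety I ⊆ {y : Fin n → ℝ | 0 ≤ c₀ + ∑ i, c i * y i} := by
    intro P hP
    have := hnn P hP
    rwa [eval_lin] at this
  exact closure_minimal (convexHull_min hVS hSconv) hSc hx

lemma mem_thetaBody_of {z : Fin n → ℝ}
    (h : ∀ d₀ (d : Fin n → ℝ), KSosMod I k (lin d₀ d) → 0 ≤ d₀ + ∑ i, d i * z i) :
    z ∈ thetaBody I k := by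
  intro g hgdeg hgsos
  have hg := exists_lin hgdeg
  rw [hg, eval_lin]
  exact h _ _ (hg ▸ hgsos)

lemma dksos_to_weak (h : IsDKSos I 1 k) : WeaklyOneKSos I k :=
  fun f hdeg hs => h f hdeg (strongly_nonneg_imp_nonneg hs)

lemma weak_to_exact (hw : WeaklyOneKSos I k) : ThetaExact I k := by
  apply Set.Subset.antisymm
  · intro x hx
    by_contra hxc
    obtain ⟨ℓ, u, hxu, hu⟩ := geometric_hahn_banach_point_closed
      ((convex_convexHull ℝ _).closure) isClosed_closure hxc
    set c : Fin n → ℝ := fun i => ℓ (Pi.single i 1) with hc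
    have hrep : ∀ y : Fin n → ℝ, ℓ y = ∑ i, y i * c i := by
      intro y
      have h1 : y = ∑ i, y i • (Pi.single i 1 : Fin n → ℝ) := by
        rw [← Finset.univ_sum_single y]
        refine Finset.sum_congr rfl fun i _ => ?_
        funext j
        by_cases h : i = j <;> simp [Pi.single_apply, h]
      calc ℓ y = ℓ (∑ i, y i • (Pi.single i 1 : Fin n → ℝ)) := by rw [← h1]
        _ = ∑ i, y i * c i := by
            rw [map_sum]
            exact Finset.sum_congr rfl fun i _ => by rw [map_smul, smul_eq_mul]
    have hfpos : ∀ P ∈ realVariety I, 0 < MvPolynomial.eval P (lin (-u) c) := by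
      intro P hP
      rw [eval_lin]
      have h1 : u < ℓ P := hu P (subset_closure (subset_convexHull ℝ _ hP))
      rw [hrep] at h1
      have : ∑ i, P i * c i = ∑ i, c i * P i :=
        Finset.sum_congr rfl fun i _ => mul_comm _ _
      linarith [this ▸ h1]
    have hsos := hw _ (lin_totalDegree (-u) c) (strongly_nonneg_of_pos hfpos)
    have hval := hx _ (lin_totalDegree (-u) c) hsos
    rw [eval_lin] at hval
    rw [hrep x] at hxu
    have : ∑ i, x i * c i = ∑ i, c i * x i :=
      Finset.sum_congr rfl fun i _ => mul_comm _ _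
    linarith [this ▸ hxu]
  · intro x hx g hgdeg hgsos
    have hg := exists_lin hgdeg
    rw [hg]
    refine nonneg_on_closure_hull ?_ x hx
    intro P hP
    rw [← hg]
    exact ksos_eval_nonneg hgsos hP


lemma lin_smul_vec (t : ℝ) (v : ℝ × (Fin n → ℝ)) :
    lin (t • v).1 (t • v).2 = t • lin v.1 v.2 := by
  simp only [Prod.smul_fst, Prod.smul_snd, smul_eq_mul, Pi.smul_apply]
  rw [MvPolynomial.smul_eq_C_mul]
  simp only [lin, Pi.smul_apply, smul_eq_mul, map_mul, mul_add, Finset.mul_sum]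
  ring

lemma lin_add_vec (v w : ℝ × (Fin n → ℝ)) :
    lin (v + w).1 (v + w).2 = lin v.1 v.2 + lin w.1 w.2 := by
  simp only [lin, Prod.fst_add, Prod.snd_add, Pi.add_apply, map_add, add_mul,
    Finset.sum_add_distrib]
  ring

lemma convex_linKSos (I : Ideal (MvPolynomial (Fin n) ℝ)) (k : ℕ) :
    Convex ℝ {v : ℝ × (Fin n → ℝ) | KSosMod I k (lin v.1 v.2)} := by
  intro v hv w hw a b ha hb _
  simp only [Set.mem_setOf_eq] at hv hw ⊢
  rw [lin_add_vec, lin_smul_vec, lin_smul_vec]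
  exact ksos_add (ksos_smul ha hv) (ksos_smul hb hw)

lemma sum_single_eq (y : Fin n → ℝ) :
    ∑ i, y i • (Pi.single i 1 : Fin n → ℝ) = y := by
  rw [← Finset.univ_sum_single y]
  refine Finset.sum_congr rfl fun i _ => ?_
  funext j
  by_cases h : i = j <;> simp [Pi.single_apply, h]

lemma sep_step (hrad : IsRealRadical I) (hk : 1 ≤ k) {v : ℝ × (Fin n → ℝ)}
    (hv : ¬ KSosMod I k (lin v.1 v.2)) :
    ∃ (y₀ : ℝ) (y : Fin n → ℝ), 0 ≤ y₀ ∧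
      (∀ d₀ (d : Fin n → ℝ), KSosMod I k (lin d₀ d) → 0 ≤ d₀ * y₀ + ∑ i, d i * y i) ∧
      v.1 * y₀ + ∑ i, v.2 i * y i < 0 := by
  obtain ⟨ℓ, u, hCu, hu⟩ := geometric_hahn_banach_closed_point
    (convex_linKSos I k) (isClosed_linKSos I k hrad hk) hv
  have hlin00 : lin (0:ℝ) (0 : Fin n → ℝ) = 0 := by simp [lin]
  have h0C : KSosMod I k (lin (0,(0 : Fin n → ℝ)).1 (0,(0 : Fin n → ℝ)).2) := by
    show KSosMod I k (lin 0 0)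
    rw [hlin00]; exact ksos_zero
  have hu0 : 0 < u := by
    have := hCu 0 h0C
    rwa [map_zero] at this
  have hCnonpos : ∀ b : ℝ × (Fin n → ℝ), KSosMod I k (lin b.1 b.2) → ℓ b ≤ 0 := by
    intro b hb
    by_contra hpos
    push_neg at hpos
    have htb : ((u / ℓ b + 1) : ℝ) • b ∈ {v : ℝ × (Fin n → ℝ) | KSosMod I k (lin v.1 v.2)} := by
      simp only [Set.mem_setOf_eq]
      rw [lin_smul_vec]
      exact ksos_smul (by positivity) hb
    have hlarge := hCu _ htb
    rw [map_smul, smul_eq_mul] at hlarge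
    have heq : (u / ℓ b + 1) * ℓ b = u + ℓ b := by field_simp
    rw [heq] at hlarge
    linarith
  have hrep : ∀ w : ℝ × (Fin n → ℝ),
      ℓ w = w.1 * ℓ (1, 0) + ∑ i, w.2 i * ℓ (0, Pi.single i 1) := by
    intro w
    have hw : w = w.1 • ((1:ℝ), (0 : Fin n → ℝ))
        + ∑ i, w.2 i • ((0:ℝ), (Pi.single i 1 : Fin n → ℝ)) := by
      apply Prod.ext
      · simp [Prod.fst_sum]
      · simp [Prod.snd_sum, sum_single_eq]
    calc ℓ w = ℓ (w.1 • ((1:ℝ), (0 : Fin n → ℝ))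
        + ∑ i, w.2 i • ((0:ℝ), (Pi.single i 1 : Fin n → ℝ))) := by rw [← hw]
      _ = w.1 * ℓ (1, 0) + ∑ i, w.2 i * ℓ (0, Pi.single i 1) := by
          rw [map_add, map_smul, map_sum, smul_eq_mul]
          congr 1
          exact Finset.sum_congr rfl fun i _ => by rw [map_smul, smul_eq_mul]
  refine ⟨-ℓ (1, 0), fun i => -ℓ (0, Pi.single i 1), ?_, ?_, ?_⟩
  · have h1C : KSosMod I k (lin ((1:ℝ),(0:Fin n → ℝ)).1 ((1:ℝ),(0:Fin n → ℝ)).2) := by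
      show KSosMod I k (lin 1 0)
      have : lin (1:ℝ) (0 : Fin n → ℝ) = 1 := by simp [lin]
      rw [this]; exact ksos_one
    have := hCnonpos _ h1C
    linarith
  · intro d₀ d hd
    have h1 := hCnonpos (d₀, d) hd
    rw [hrep (d₀, d)] at h1
    have h2 : d₀ * -ℓ (1, 0) + ∑ i, d i * -ℓ (0, Pi.single i 1)
        = -(d₀ * ℓ (1, 0) + ∑ i, d i * ℓ (0, Pi.single i 1)) := by
      rw [Finset.sum_congr rfl fun i (_ : i ∈ Finset.univ) =>
        (mul_neg (d i) (ℓ (0, Pi.single i 1)))]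
      rw [Finset.sum_neg_distrib]
      ring
    rw [h2]
    simpa using neg_nonneg.2 h1
  · have h1 : u < ℓ v := hu
    rw [hrep v] at h1
    have h2 : v.1 * -ℓ (1, 0) + ∑ i, v.2 i * -ℓ (0, Pi.single i 1)
        = -(v.1 * ℓ (1, 0) + ∑ i, v.2 i * ℓ (0, Pi.single i 1)) := by
      rw [Finset.sum_congr rfl fun i (_ : i ∈ Finset.univ) =>
        (mul_neg (v.2 i) (ℓ (0, Pi.single i 1)))]
      rw [Finset.sum_neg_distrib]
      ring
    rw [h2]
    linarith

lemma div_identity (y₀ d₀ : ℝ) (hy₀ : y₀ ≠ 0) (d y : Fin n → ℝ) :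
    d₀ + ∑ i, d i * (y i / y₀) = (d₀ * y₀ + ∑ i, d i * y i) / y₀ := by
  rw [add_div, Finset.sum_div]
  have h1 : d₀ * y₀ / y₀ = d₀ := by field_simp
  rw [h1]
  exact congrArg _ (Finset.sum_congr rfl fun i _ => (mul_div_assoc _ _ _).symm)

lemma exact_to_dksos (hrad : IsRealRadical I) (hk : 1 ≤ k) (hex : ThetaExact I k) :
    IsDKSos I 1 k := by
  by_cases hV : (realVariety I).Nonempty
  · obtain ⟨w, hw⟩ := hV
    intro f hdeg hnn
    have hflin := exists_lin hdeg
    set c₀ := MvPolynomial.coeff 0 f with hc₀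
    set c : Fin n → ℝ := fun i => MvPolynomial.coeff (Finsupp.single i 1) f with hc
    rw [hflin]
    by_contra hns
    have hns' : ¬ KSosMod I k (lin ((c₀, c) : ℝ × (Fin n → ℝ)).1 (c₀, c).2) := hns
    obtain ⟨y₀, y, hy₀, hCpos, hvneg⟩ := sep_step hrad hk hns'
    simp only [] at hvneg
    have hnn' : ∀ P ∈ realVariety I, 0 ≤ MvPolynomial.eval P (lin c₀ c) := by
      intro P hP; rw [← hflin]; exact hnn P hP
    rcases lt_or_eq_of_le hy₀ with hy₀pos | hy₀zero
    · set z : Fin n → ℝ := fun i => y i / y₀ with hz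
      have hzth : z ∈ thetaBody I k := by
        apply mem_thetaBody_of
        intro d₀ d hd
        have h1 := hCpos d₀ d hd
        rw [hz]
        rw [div_identity y₀ d₀ hy₀pos.ne' d y]
        exact div_nonneg h1 hy₀pos.le
      rw [hex] at hzth
      have h3 := nonneg_on_closure_hull hnn' z hzth
      rw [eval_lin] at h3
      rw [hz] at h3
      rw [div_identity y₀ c₀ hy₀pos.ne' c y] at h3
      have h4 : (c₀ * y₀ + ∑ i, c i * y i) / y₀ < 0 := div_neg_of_neg_of_pos hvneg hy₀pos
      linarith
    · set s : ℝ := ∑ i, c i * y i with hs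
      have hsneg : s < 0 := by
        rw [← hy₀zero] at hvneg
        simpa using hvneg
      set E : ℝ := c₀ + ∑ i, c i * w i with hE
      have hEnn : 0 ≤ E := by
        have := hnn' w hw
        rwa [eval_lin] at this
      set t : ℝ := (E + 1) / (-s) with ht
      have htnn : 0 ≤ t := by
        apply div_nonneg <;> linarith
      set z : Fin n → ℝ := fun i => w i + t * y i with hz
      have hsum_id : ∀ d₀ : ℝ, ∀ d : Fin n → ℝ,
          d₀ + ∑ i, d i * (w i + t * y i)
            = (d₀ + ∑ i, d i * w i) + t * ∑ i, d i * y i := by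
        intro d₀ d
        rw [Finset.sum_congr rfl fun i (_ : i ∈ Finset.univ) =>
          (show d i * (w i + t * y i) = d i * w i + t * (d i * y i) by ring)]
        rw [Finset.sum_add_distrib, ← Finset.mul_sum]
        ring
      have hzth : z ∈ thetaBody I k := by
        apply mem_thetaBody_of
        intro d₀ d hd
        have h1 := hCpos d₀ d hd
        rw [← hy₀zero] at h1
        simp only [mul_zero, zero_add] at h1
        have h2 : 0 ≤ d₀ + ∑ i, d i * w i := by
          have := ksos_eval_nonneg hd hw
          rwa [eval_lin] at this
        rw [hz, hsum_id d₀ d]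
        have := mul_nonneg htnn h1
        linarith
      rw [hex] at hzth
      have h3 := nonneg_on_closure_hull hnn' z hzth
      rw [eval_lin, hz, hsum_id c₀ c, ← hs, ← hE] at h3
      have hsne : s ≠ 0 := hsneg.ne
      have hts : t * s = -(E + 1) := by
        rw [ht, div_mul_eq_mul_div, mul_div_assoc, div_neg, div_self hsne]
        ring
      rw [hts] at h3
      linarith
  · have hVempty : realVariety I = ∅ := Set.not_nonempty_iff_eq_empty.1 hV
    have hTheta : thetaBody I k = ∅ := by
      rw [hex, hVempty]
      simp
    have hneg1 : KSosMod I k (lin (-1 : ℝ) (0 : Fin n → ℝ)) := by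
      by_contra hns
      have hns' : ¬ KSosMod I k (lin (((-1:ℝ), (0:Fin n → ℝ)) : ℝ × (Fin n → ℝ)).1
        ((-1:ℝ), (0:Fin n → ℝ)).2) := hns
      obtain ⟨y₀, y, hy₀, hCpos, hvneg⟩ := sep_step hrad hk hns'
      have hy₀pos : 0 < y₀ := by
        have h0 : ∑ i, (((-1:ℝ), (0:Fin n → ℝ)) : ℝ × (Fin n → ℝ)).2 i * y i = 0 := by simp
        rw [h0] at hvneg
        simp only [] at hvneg
        nlinarith
      have hzth : (fun i => y i / y₀) ∈ thetaBody I k := by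
        apply mem_thetaBody_of
        intro d₀ d hd
        rw [div_identity y₀ d₀ hy₀pos.ne' d y]
        exact div_nonneg (hCpos d₀ d hd) hy₀pos.le
      rw [hTheta] at hzth
      exact hzth
    intro f _ _
    obtain ⟨r, g, _, hmem⟩ := hneg1
    have h1 : (1 : MvPolynomial (Fin n) ℝ) + ∑ i, (g i) ^ 2 ∈ I := by
      have hlinneg : lin (-1 : ℝ) (0 : Fin n → ℝ) = -1 := by simp [lin]
      rw [hlinneg] at hmem
      have h2 : (1 : MvPolynomial (Fin n) ℝ) + ∑ i, (g i) ^ 2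
          = -((-1) - ∑ i, (g i) ^ 2) := by ring
      rw [h2]
      exact neg_mem hmem
    have hfI : f ∈ I := by
      apply hrad
      refine ⟨1, le_refl 1, r, fun i => f * g i, ?_⟩
      have h3 : f ^ (2 * 1) + ∑ i, (f * g i) ^ 2
          = f ^ 2 * (1 + ∑ i, (g i) ^ 2) := by
        rw [Finset.sum_congr rfl fun i (_ : i ∈ Finset.univ) =>
          (mul_pow f (g i) 2)]
        rw [mul_add, mul_one, Finset.mul_sum]
        norm_num
      rw [h3]
      exact Ideal.mul_mem_left _ _ h1
    exact ksos_of_mem hfI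


end OO
end Aux

/-- For a real radical ideal `I`, the conditions "weakly `(1,k)`-sos", "`(1,k)`-sos" and
"`TH_k`-exact" are all equivalent. -/
theorem weaklyOneKSos_iff_oneKSos_iff_thetaExact {n : ℕ}
    (I : Ideal (MvPolynomial (Fin n) ℝ)) (hrad : IsRealRadical I) (k : ℕ) (hk : 1 ≤ k) :
    (WeaklyOneKSos I k ↔ IsDKSos I 1 k) ∧ (IsDKSos I 1 k ↔ ThetaExact I k) := by
  have h1 : IsDKSos I 1 k → WeaklyOneKSos I k := OO.dksos_to_weak
  have h2 : WeaklyOneKSos I k → ThetaExact I k := OO.weak_to_exact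
  have h3 : ThetaExact I k → IsDKSos I 1 k := fun h => OO.exact_to_dksos hrad hk h
  exact ⟨⟨fun hw => h3 (h2 hw), h1⟩, ⟨fun hd => h2 (h1 hd), h3⟩⟩
end

section
/- Let I ⊆ ℝ[x₁,…,xₙ] be an ideal and suppose P ∈ V_ℝ(I) is convex-singular. Then there exists a polynomial f of degree at most 1 which is nonnegative on V_ℝ(I), satisfies f(P) = 0, and induces a nonzero linear function on the tangent space of V(I) at P; in particular there is a tangent vector v to V(I) at P on which the linear part of f is negative. -/
open MvPolynomial Polynomial

noncomputable section AuxSep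

private lemma auxRoot_sq : (AdjoinRoot.root ((Polynomial.X : Polynomial ℝ) ^ 2)) ^ 2 = 0 := by
  rw [← AdjoinRoot.mk_X, ← map_pow]; exact AdjoinRoot.mk_self

/-- The `ℝ`-algebra automorphism `ε ↦ -ε` of `ℝ[ε]/(ε²)`. -/
private def auxEpsNeg : Eps 2 →ₐ[ℝ] Eps 2 :=
  AdjoinRoot.liftAlgHom _ (Algebra.ofId ℝ (Eps 2)) (-(AdjoinRoot.root _)) (by simp [map_pow, auxRoot_sq])

private lemma aux_neg_mem_tangentVectors {n : ℕ} {I : Ideal (MvPolynomial (Fin n) ℝ)}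
    {P : Fin n → ℝ} {v : Fin n → ℝ} (hv : v ∈ tangentVectors I P) :
    -v ∈ tangentVectors I P := by
  obtain ⟨φ, hφ⟩ := hv
  refine ⟨auxEpsNeg.comp φ, fun i => ?_⟩
  simp only [AlgHom.comp_apply, hφ i, map_add, AlgHom.commutes, map_smul]
  have : auxEpsNeg (AdjoinRoot.root _) = -(AdjoinRoot.root _) := by simp [auxEpsNeg]
  rw [this]
  simp [smul_neg, neg_smul]

private lemma aux_exists_supporting {E : Type*} [NormedAddCommGroup E] [NormedSpace ℝ E]
    {K : Set E} (hK : Convex ℝ K) {P Q : E}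
    (hPK : P ∈ K) (hPni : P ∉ intrinsicInterior ℝ K)
    (hQ : Q ∈ intrinsicInterior ℝ K) :
    ∃ g : E →L[ℝ] ℝ, (∀ x ∈ K, g P ≤ g x) ∧ g P < g Q := by
  have hQK : Q ∈ K := intrinsicInterior_subset hQ
  have hPS : P ∈ affineSpan ℝ K := subset_affineSpan ℝ K hPK
  have hQS : Q ∈ affineSpan ℝ K := subset_affineSpan ℝ K hQK
  haveI : Nonempty (affineSpan ℝ K) := ⟨⟨P, hPS⟩⟩
  set S := affineSpan ℝ K with hSdef
  let q : S := ⟨Q, hQS⟩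
  let p : S := ⟨P, hPS⟩
  let h : S ≃ₜ S.direction := (AffineIsometryEquiv.constVSub ℝ q).toHomeomorph
  have hcoe : ∀ x : S, ((h x : S.direction) : E) = Q - (x : E) := by
    intro x
    show ((q -ᵥ x : S.direction) : E) = Q - (x : E)
    rw [AffineSubspace.coe_vsub]
    simp [q, vsub_eq_sub]
  let C : Set S.direction := h '' ((↑) ⁻¹' K)
  have hCeq : C = {w : S.direction | Q - (w : E) ∈ K} := by
    ext w
    constructor
    · rintro ⟨x, hx, rfl⟩
      have := hcoe x
      simp only [Set.mem_setOf_eq, this]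
      simpa using hx
    · intro hw
      have hwS : Q - (w : E) ∈ S := subset_affineSpan ℝ K hw
      refine ⟨⟨Q - (w : E), hwS⟩, by simpa using hw, ?_⟩
      apply Subtype.ext
      rw [hcoe]
      simp
  have hCconv : Convex ℝ C := by
    rw [hCeq]
    intro w1 h1 w2 h2 a b ha hb hab
    simp only [Set.mem_setOf_eq] at h1 h2 ⊢
    have heq : Q - ((a • w1 + b • w2 : S.direction) : E)
        = a • (Q - (w1 : E)) + b • (Q - (w2 : E)) := by
      push_cast
      have h' : a • (Q - (w1 : E)) + b • (Q - (w2 : E))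
          = (a + b) • Q - (a • (w1 : E) + b • (w2 : E)) := by module
      rw [h', hab, one_smul]
    rw [heq]
    exact hK h1 h2 ha hb hab
  have hCint : interior C = h '' interior ((↑) ⁻¹' K) := (Homeomorph.image_interior h _).symm
  obtain ⟨y, hy, hyQ⟩ := hQ
  have h0 : (0 : S.direction) ∈ interior C := by
    rw [hCint]
    refine ⟨y, hy, ?_⟩
    apply Subtype.ext
    rw [hcoe, hyQ]
    simp
  have hpC : h p ∉ interior C := by
    intro hc
    rw [hCint] at hc
    obtain ⟨z, hz, hzp⟩ := hc
    have hz2 : z = p := h.injective hzp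
    rw [hz2] at hz
    exact hPni ⟨p, hz, rfl⟩
  obtain ⟨f, hf⟩ := geometric_hahn_banach_open_point hCconv.interior isOpen_interior hpC
  have hfp0 : 0 < f (h p) := by
    have := hf 0 h0
    simpa using this
  have hbound : ∀ w ∈ C, f w ≤ f (h p) := by
    intro w hw
    by_contra hgt
    push_neg at hgt
    have hfw : 0 < f w := hfp0.trans hgt
    set b := f (h p) / f w with hbdef
    have hb0 : 0 ≤ b := div_nonneg hfp0.le hfw.le
    have hb1 : b < 1 := (div_lt_one hfw).2 hgt
    have hmem : b • w ∈ interior C := by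
      have := hCconv.combo_interior_closure_mem_interior h0 (subset_closure hw)
        (a := 1 - b) (b := b) (by linarith) hb0 (by ring)
      simpa using this
    have hlt := hf _ hmem
    rw [map_smul] at hlt
    rw [smul_eq_mul, hbdef, div_mul_cancel₀ _ hfw.ne'] at hlt
    exact lt_irrefl _ hlt
  obtain ⟨g, hg, -⟩ := exists_extension_norm_eq S.direction f
  have hhp : ((h p : S.direction) : E) = Q - P := hcoe p
  have hgp : g (Q - P) = f (h p) := by rw [← hhp]; exact hg _
  refine ⟨g, ?_, ?_⟩
  · intro x hx
    have hxS : x ∈ S := subset_affineSpan ℝ K hx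
    have hQx : Q - x ∈ S.direction := by
      have := AffineSubspace.vsub_mem_direction hQS hxS
      simpa [vsub_eq_sub] using this
    have hwC : (⟨Q - x, hQx⟩ : S.direction) ∈ C := by
      rw [hCeq]
      simpa using hx
    have hle := hbound _ hwC
    have : g (Q - x) ≤ g (Q - P) := by
      rw [hgp, show g (Q - x) = f ⟨Q - x, hQx⟩ from hg ⟨Q - x, hQx⟩]
      exact hle
    rw [map_sub, map_sub] at this
    linarith
  · have : 0 < g (Q - P) := hgp ▸ hfp0
    rw [map_sub] at this
    linarith

private lemma aux_gsum {n : ℕ} (g : (Fin n → ℝ) →L[ℝ] ℝ) (x : Fin n → ℝ) :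
    g x = ∑ i, g (Pi.single i 1) * x i := by
  conv_lhs => rw [pi_eq_sum_univ x, map_sum]
  refine Finset.sum_congr rfl fun i _ => ?_
  rw [map_smul, smul_eq_mul, mul_comm]
  congr 1
  congr 1
  funext j
  simp [Pi.single_apply, eq_comm]

/-- The affine polynomial `x ↦ g(x) - c` associated to a linear functional `g`. -/
private def auxFpoly {n : ℕ} (g : (Fin n → ℝ) →L[ℝ] ℝ) (c : ℝ) : MvPolynomial (Fin n) ℝ :=
  (∑ i, MvPolynomial.C (g (Pi.single i 1)) * MvPolynomial.X i) - MvPolynomial.C c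

private lemma aux_eval_Fpoly {n : ℕ} (g : (Fin n → ℝ) →L[ℝ] ℝ) (c : ℝ) (x : Fin n → ℝ) :
    MvPolynomial.eval x (auxFpoly g c) = g x - c := by
  simp [auxFpoly, aux_gsum g x]

private lemma aux_deg_Fpoly {n : ℕ} (g : (Fin n → ℝ) →L[ℝ] ℝ) (c : ℝ) :
    (auxFpoly g c).totalDegree ≤ 1 := by
  have hneg : (auxFpoly g c).totalDegree
      = ((∑ i, MvPolynomial.C (g (Pi.single i 1)) * MvPolynomial.X i)
        + MvPolynomial.C (-c)).totalDegree := by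
    rw [auxFpoly, sub_eq_add_neg, map_neg]
  rw [hneg]
  refine (totalDegree_add _ _).trans ?_
  rw [totalDegree_C]
  simp only [max_le_iff]
  refine ⟨(totalDegree_finset_sum _ _).trans ?_, Nat.zero_le _⟩
  refine Finset.sup_le fun i _ => ?_
  refine (totalDegree_mul _ _).trans ?_
  rw [totalDegree_C]
  simp [totalDegree_X]

private lemma aux_linGrad_Fpoly {n : ℕ} (g : (Fin n → ℝ) →L[ℝ] ℝ) (c : ℝ) (w : Fin n → ℝ) :
    linGrad (auxFpoly g c) w = g w := by
  rw [aux_gsum g w]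
  unfold linGrad auxFpoly
  refine Finset.sum_congr rfl fun i _ => ?_
  congr 1
  rw [map_sub, map_sum]
  simp [pderiv_C_mul, pderiv_X, Pi.single_apply]

end AuxSep

/-- If `P ∈ V_ℝ(I)` is convex-singular, then there is a polynomial `f` of degree at most `1`
which is nonnegative on `V_ℝ(I)`, vanishes at `P`, and induces a nonzero linear function on
the tangent space of `V(I)` at `P`; in particular there is a tangent vector on which the
linear part of `f` is negative. -/
theorem exists_separating_linear_of_convexSingular {n : ℕ}
    (I : Ideal (MvPolynomial (Fin n) ℝ)) (P : Fin n → ℝ) (hP : P ∈ realVariety I)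
    (hcs : ConvexSingular I P) :
    ∃ f : MvPolynomial (Fin n) ℝ, f.totalDegree ≤ 1 ∧
      (∀ Q ∈ realVariety I, 0 ≤ MvPolynomial.eval Q f) ∧
      MvPolynomial.eval P f = 0 ∧
      (∃ v ∈ tangentVectors I P, linGrad f v ≠ 0) ∧
      ∃ v ∈ tangentVectors I P, linGrad f v < 0 := by
  obtain ⟨-, hPfr, v, hvT, hQint⟩ := hcs
  have hKconv : Convex ℝ (convexHull ℝ (realVariety I)) := convex_convexHull ℝ _
  have hPK : P ∈ convexHull ℝ (realVariety I) := subset_convexHull ℝ _ hP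
  have hPni : P ∉ intrinsicInterior ℝ (convexHull ℝ (realVariety I)) := by
    rw [← intrinsicClosure_diff_intrinsicInterior] at hPfr
    exact hPfr.2
  obtain ⟨g, hgK, hgQ⟩ := aux_exists_supporting hKconv hPK hPni hQint
  have hgv : 0 < g v := by
    rw [map_add] at hgQ
    linarith
  refine ⟨auxFpoly g (g P), aux_deg_Fpoly g _, fun Q hQ => ?_, ?_,
    ⟨v, hvT, ?_⟩, ⟨-v, aux_neg_mem_tangentVectors hvT, ?_⟩⟩
  · rw [aux_eval_Fpoly]
    have := hgK Q (subset_convexHull ℝ _ hQ)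
    linarith
  · rw [aux_eval_Fpoly]; ring
  · rw [aux_linGrad_Fpoly]
    exact hgv.ne'
  · rw [aux_linGrad_Fpoly, map_neg]
    linarith
end

section
/- Let I ⊆ ℝ[x₁,…,xₙ] be an ideal, A = ℝ[x₁,…,xₙ]/I, P ∈ V_ℝ(I), and f ∈ A. If there exist m ≥ 1, an ℝ-algebra homomorphism φ : A → ℝ[ε]/(ε^m) at P, and an odd natural number N < m such that φ(f) = a_N ε^N + ⋯ + a_{m−1}ε^{m−1} with a_N ≠ 0 (i.e., the leading term of φ(f) occurs in odd degree), then f is not strongly nonnegative at P. -/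
open MvPolynomial Polynomial

private lemma coeff_comp_neg_X (p : Polynomial ℝ) (k : ℕ) :
    (p.comp (-Polynomial.X)).coeff k = (-1) ^ k * p.coeff k := by
  induction p using Polynomial.induction_on' with
  | add p q hp hq => simp [Polynomial.add_comp, hp, hq, mul_add]
  | monomial n a =>
    have h1 : ((-1 : Polynomial ℝ)) = Polynomial.C (-1) := by simp
    rw [← Polynomial.C_mul_X_pow_eq_monomial, Polynomial.C_mul_comp, Polynomial.X_pow_comp,
      neg_pow, h1, ← Polynomial.C_pow, mul_comm (Polynomial.C ((-1 : ℝ) ^ n)), ← mul_assoc,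
      mul_comm (Polynomial.C a), Polynomial.coeff_mul_C, Polynomial.coeff_mul_C,
      Polynomial.coeff_X_pow]
    by_cases h : k = n
    · subst h; ring
    · simp [h]

private lemma not_epsNonneg_of_neg {m N : ℕ} (hNm : N < m) (q : Polynomial ℝ)
    (hlow : ∀ j < N, q.coeff j = 0) (hneg : q.coeff N < 0) :
    ¬ EpsNonneg (AdjoinRoot.mk ((Polynomial.X : Polynomial ℝ) ^ m) q) := by
  rintro (h0 | ⟨r, hr, hpos⟩)
  · have hdvd := AdjoinRoot.mk_eq_zero.mp h0
    exact hneg.ne (Polynomial.X_pow_dvd_iff.mp hdvd N hNm)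
  · have hdvd : (Polynomial.X : Polynomial ℝ) ^ m ∣ (r - q) := by
      rw [← AdjoinRoot.mk_eq_zero, map_sub, hr, sub_eq_zero]
    have hagree : ∀ d < m, r.coeff d = q.coeff d := by
      intro d hd
      have := Polynomial.X_pow_dvd_iff.mp hdvd d hd
      rw [Polynomial.coeff_sub, sub_eq_zero] at this
      exact this
    have hrN : r.coeff N = q.coeff N := hagree N hNm
    have hrne : r ≠ 0 := fun h => (hneg.ne (by simp [h] at hrN; exact hrN.symm))
    have htd : r.natTrailingDegree = N := by
      refine le_antisymm (Polynomial.natTrailingDegree_le_of_ne_zero (by rw [hrN]; exact hneg.ne)) ?_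
      refine Polynomial.le_natTrailingDegree hrne ?_
      intro j hj
      rw [hagree j (hj.trans hNm), hlow j hj]
    rw [htd, hrN] at hpos
    exact absurd hpos (not_lt.mpr hneg.le)

/-- If some homomorphism `φ : A → ℝ[ε]/(ε^m)` at `P` sends `f` to an element whose leading
term occurs in odd degree `N < m`, then `f` is not strongly nonnegative at `P`. -/
theorem not_stronglyNonnegAt_of_odd_leading_term {n : ℕ}
    (I : Ideal (MvPolynomial (Fin n) ℝ)) (P : Fin n → ℝ) (hP : P ∈ realVariety I)
    (f : MvPolynomial (Fin n) ℝ) (m : ℕ) (hm : 1 ≤ m)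
    (φ : (MvPolynomial (Fin n) ℝ ⧸ I) →ₐ[ℝ] Eps m) (hφ : AtPoint I P φ)
    (N : ℕ) (hodd : Odd N) (hNm : N < m) (p : Polynomial ℝ)
    (hp : AdjoinRoot.mk ((Polynomial.X : Polynomial ℝ) ^ m) p = φ (Ideal.Quotient.mk I f))
    (hlow : ∀ j < N, p.coeff j = 0) (hN : p.coeff N ≠ 0) :
    ¬ StronglyNonnegAt I P (Ideal.Quotient.mk I f) := by
  intro hsn
  rcases lt_or_gt_of_ne hN with hneg | hpos
  · exact not_epsNonneg_of_neg hNm p hlow hneg (hp ▸ hsn m φ hφ)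
  · -- compose with ε ↦ -ε
    have hroot : (AdjoinRoot.root ((Polynomial.X : Polynomial ℝ) ^ m)) ^ m = 0 := by
      have := AdjoinRoot.mk_self (f := (Polynomial.X : Polynomial ℝ) ^ m)
      rwa [← AdjoinRoot.aeval_eq, map_pow, Polynomial.aeval_X] at this
    have haev : Polynomial.aeval (-(AdjoinRoot.root ((Polynomial.X : Polynomial ℝ) ^ m)))
        ((Polynomial.X : Polynomial ℝ) ^ m) = 0 := by
      rw [map_pow, Polynomial.aeval_X, neg_pow, hroot, mul_zero]
    set σ : Eps m →ₐ[ℝ] Eps m :=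
      AdjoinRoot.liftAlgHom _ (Algebra.ofId ℝ (Eps m)) (-(AdjoinRoot.root ((Polynomial.X : Polynomial ℝ) ^ m)))
        (by simpa using haev) with hσ
    set φ' := σ.comp φ with hφ'def
    have hAt : AtPoint I P φ' := by
      intro r
      have hx := hφ r
      rw [Ideal.mem_span_singleton] at hx ⊢
      obtain ⟨c, hc⟩ := hx
      have : φ' (Ideal.Quotient.mk I r) - algebraMap ℝ (Eps m) (MvPolynomial.eval P r)
          = σ (φ (Ideal.Quotient.mk I r) - algebraMap ℝ (Eps m) (MvPolynomial.eval P r)) := by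
        rw [map_sub, AlgHom.commutes]; rfl
      rw [this, hc, map_mul]
      have hσroot : σ (AdjoinRoot.root ((Polynomial.X : Polynomial ℝ) ^ m))
          = -(AdjoinRoot.root ((Polynomial.X : Polynomial ℝ) ^ m)) := by
        rw [hσ, AdjoinRoot.liftAlgHom_root]
      rw [hσroot]
      exact ⟨-σ c, by ring⟩
    have hrep : AdjoinRoot.mk ((Polynomial.X : Polynomial ℝ) ^ m) (p.comp (-Polynomial.X))
        = φ' (Ideal.Quotient.mk I f) := by
      rw [← AdjoinRoot.aeval_eq, Polynomial.aeval_comp, map_neg, Polynomial.aeval_X,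
        hφ'def, AlgHom.comp_apply, ← hp, hσ, AdjoinRoot.liftAlgHom_mk, Polynomial.aeval_def]
      rfl
    refine not_epsNonneg_of_neg hNm (p.comp (-Polynomial.X)) ?_ ?_ (hrep ▸ hsn m φ' hAt)
    · intro j hj; rw [coeff_comp_neg_X, hlow j hj, mul_zero]
    · rw [coeff_comp_neg_X, hodd.neg_one_pow, neg_one_mul]
      exact neg_lt_zero.mpr hpos
end
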